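/- arXiv:2310.01970 — 6 statements merged into one kernel-verified Lean document; each statement's English description precedes it below -/
import Mathlib

section
/- For every τ ∈ (0,1) and all real numbers u and v, Knight's identity holds: ρ_τ(u − v) − ρ_τ(u) = −v·ψ_τ(u) + ∫₀^v [1{u ≤ s} − 1{u ≤ 0}] ds, where the integral is the oriented Lebesgue integral (equal to −∫_v^0 when v < 0). -/
open MeasureTheory

lemma knight_aux (u : ℝ) (c : ℝ) (v : ℝ) :
    (∫ s in (0 : ℝ)..v, ((if u ≤ s then (1 : ℝ) else 0) - c))
      = (max (v - u) 0 - c * v) - (max (0 - u) 0 - c * 0) := by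
  set F : ℝ → ℝ := fun s => max (s - u) 0 - c * s with hF
  have hcont : ContinuousOn F (Set.uIcc 0 v) := by
    apply Continuous.continuousOn
    exact ((continuous_id.sub continuous_const).max continuous_const).sub
      (continuous_const.mul continuous_id)
  have hint : IntervalIntegrable (fun s => (if u ≤ s then (1 : ℝ) else 0) - c) volume 0 v := by
    apply IntervalIntegrable.sub _ intervalIntegrable_const
    have : (fun s : ℝ => (if u ≤ s then (1 : ℝ) else 0))
        = Set.indicator (Set.Ici u) (fun _ => (1 : ℝ)) := by
      ext s
      by_cases h : u ≤ s <;> simp [Set.indicator, h]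
    rw [this, intervalIntegrable_iff]
    exact (integrableOn_const measure_Ioc_lt_top.ne).indicator measurableSet_Ici
  have hderiv : ∀ x ∈ Set.Ioo (min 0 v) (max 0 v),
      HasDerivWithinAt F ((if u ≤ x then (1 : ℝ) else 0) - c) (Set.Ioi x) x := by
    intro x _
    have hc : HasDerivWithinAt (fun s : ℝ => c * s) c (Set.Ioi x) x := by
      simpa using ((hasDerivAt_id x).const_mul c).hasDerivWithinAt
    apply HasDerivWithinAt.sub _ hc
    by_cases h : u ≤ x
    · -- on [x, ∞) ∩ nbhd, if x ≥ u then near right of x, max (s-u) 0 = s - u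
      have : HasDerivWithinAt (fun s : ℝ => s - u) 1 (Set.Ioi x) x :=
        ((hasDerivAt_id x).sub_const u).hasDerivWithinAt
      simp only [h, if_true]
      apply this.congr
      · intro s hs
        have : u ≤ s := h.trans (le_of_lt hs)
        simp [max_eq_left (sub_nonneg.mpr this)]
      · simp [max_eq_left (sub_nonneg.mpr h)]
    · push_neg at h
      have : HasDerivWithinAt (fun _ : ℝ => (0 : ℝ)) 0 (Set.Ioi x) x :=
        (hasDerivAt_const x 0).hasDerivWithinAt
      simp only [if_neg (not_le.mpr h)]
      have h2 : HasDerivWithinAt (fun s : ℝ => max (s - u) 0) 0 (Set.Ioi x ∩ Set.Iio u) x := by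
        apply HasDerivWithinAt.congr ((hasDerivAt_const x (0:ℝ)).hasDerivWithinAt)
        · intro s hs
          simp [max_eq_right (sub_nonpos.mpr (Set.mem_Iio.mp hs.2).le)]
        · simp [max_eq_right (sub_nonpos.mpr h.le)]
      have hmem : Set.Ioi x ∩ Set.Iio u ∈ nhdsWithin x (Set.Ioi x) := by
        exact inter_mem_nhdsWithin _ (Iio_mem_nhds h)
      exact h2.mono_of_mem_nhdsWithin hmem
  have := intervalIntegral.integral_eq_sub_of_hasDeriv_right hcont hderiv hint
  simpa [hF] using this

/-- Knight's identity: for the check function `ρ_τ(u) = (τ - 1{u ≤ 0})·u` and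
`ψ_τ(u) = τ - 1{u ≤ 0}`, we have
`ρ_τ(u − v) − ρ_τ(u) = −v·ψ_τ(u) + ∫₀^v [1{u ≤ s} − 1{u ≤ 0}] ds`. -/
theorem knight_identity (τ : ℝ) (hτ : τ ∈ Set.Ioo (0 : ℝ) 1) (u v : ℝ) :
    (τ - if u - v ≤ 0 then 1 else 0) * (u - v) - (τ - if u ≤ 0 then 1 else 0) * u
      = -v * (τ - if u ≤ 0 then 1 else 0)
        + ∫ s in (0 : ℝ)..v, ((if u ≤ s then (1 : ℝ) else 0) - (if u ≤ 0 then 1 else 0)) := by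
  rw [knight_aux u _ v]
  rcases max_cases (v - u) 0 with ⟨e3, l3⟩ | ⟨e3, l3⟩ <;>
  rcases max_cases ((0:ℝ) - u) 0 with ⟨e4, l4⟩ | ⟨e4, l4⟩ <;>
  by_cases h1 : u - v ≤ 0 <;> by_cases h2 : u ≤ 0 <;>
    simp only [h1, h2, if_true, if_false, e3, e4] <;> (try push_neg at h1 h2) <;> nlinarith
end

section
/- Let ε be a real-valued random variable on a probability space with cumulative distribution function F(s) = P(ε ≤ s). Then for every τ ∈ (0,1) and every v ∈ ℝ, the difference ρ_τ(ε − v) − ρ_τ(ε) is integrable and E[ρ_τ(ε − v) − ρ_τ(ε)] = −v·(τ − F(0)) + ∫₀^v (F(s) − F(0)) ds, where the integral is the oriented Lebesgue integral. -/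
open MeasureTheory

lemma lemA (a b u : ℝ) (hab : a ≤ b) :
    ∫ s in Set.Ioc a b, (if u ≤ s then (1:ℝ) else 0) = max (b - u) 0 - max (a - u) 0 := by
  have h1 : (fun s => if u ≤ s then (1:ℝ) else 0) = (Set.Ici u).indicator (fun _ => (1:ℝ)) := by
    ext s; simp [Set.indicator, Set.mem_Ici]
  rw [h1, integral_indicator_const (1:ℝ) measurableSet_Ici, measureReal_def, Measure.restrict_apply measurableSet_Ici]
  rcases le_or_gt u a with h | h
  · have : Set.Ici u ∩ Set.Ioc a b = Set.Ioc a b := by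
      ext s; simp (config := {contextual := true}) [Set.mem_Ici, Set.mem_Ioc]
      intro hs _; linarith
    rw [this, Real.volume_Ioc]
    rw [max_eq_left (by linarith), max_eq_left (by linarith),
      ENNReal.toReal_ofReal (by linarith)]
    simp
  · rcases le_or_gt u b with h2 | h2
    · have : Set.Ici u ∩ Set.Ioc a b = Set.Icc u b := by
        ext s; constructor
        · rintro ⟨hs1, hs2, hs3⟩; exact ⟨hs1, hs3⟩
        · rintro ⟨hs1, hs2⟩; exact ⟨hs1, lt_of_lt_of_le h hs1, hs2⟩
      rw [this, Real.volume_Icc, max_eq_left (by linarith), max_eq_right (by linarith),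
        ENNReal.toReal_ofReal (by linarith)]
      simp
    · have : Set.Ici u ∩ Set.Ioc a b = ∅ := by
        ext s; simp only [Set.mem_inter_iff, Set.mem_Ici, Set.mem_Ioc, Set.mem_empty_iff_false,
          iff_false, not_and]
        intro hs1 hs2; intro hs3; linarith
      rw [this, measure_empty, max_eq_right (by linarith), max_eq_right (by linarith)]
      simp

lemma lemB {Ω : Type*} [MeasurableSpace Ω] (μ : Measure Ω) [IsProbabilityMeasure μ]
    (ε : Ω → ℝ) (hε : Measurable ε) (a b : ℝ) (hab : a ≤ b) :
    ∫ ω, (max (b - ε ω) 0 - max (a - ε ω) 0) ∂μ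
      = ∫ s in Set.Ioc a b, (μ {ω | ε ω ≤ s}).toReal := by
  have hfin : IsFiniteMeasure (volume.restrict (Set.Ioc a b)) := by
    constructor
    rw [Measure.restrict_apply_univ, Real.volume_Ioc]
    exact ENNReal.ofReal_lt_top
  have hmeas : Measurable (Function.uncurry fun (ω : Ω) (s : ℝ) =>
      if ε ω ≤ s then (1:ℝ) else 0) := by
    have : MeasurableSet {p : Ω × ℝ | ε p.1 ≤ p.2} :=
      measurableSet_le (hε.comp measurable_fst) measurable_snd
    exact Measurable.ite this measurable_const measurable_const
  have hint : Integrable (Function.uncurry fun (ω : Ω) (s : ℝ) =>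
      if ε ω ≤ s then (1:ℝ) else 0) (μ.prod (volume.restrict (Set.Ioc a b))) := by
    refine Integrable.mono' (integrable_const 1) hmeas.aestronglyMeasurable ?_
    filter_upwards with p
    by_cases h : ε p.1 ≤ p.2 <;> simp [Function.uncurry, h]
  have hswap := MeasureTheory.integral_integral_swap hint
  calc ∫ ω, (max (b - ε ω) 0 - max (a - ε ω) 0) ∂μ
      = ∫ ω, ∫ s in Set.Ioc a b, (if ε ω ≤ s then (1:ℝ) else 0) ∂volume ∂μ := by
        congr 1; ext ω; rw [lemA a b (ε ω) hab]
    _ = ∫ s in Set.Ioc a b, ∫ ω, (if ε ω ≤ s then (1:ℝ) else 0) ∂μ ∂volume := hswap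
    _ = ∫ s in Set.Ioc a b, (μ {ω | ε ω ≤ s}).toReal := by
        congr 1; ext s
        have h1 : (fun ω => if ε ω ≤ s then (1:ℝ) else 0)
            = ({ω | ε ω ≤ s}).indicator (fun _ => (1:ℝ)) := by
          ext ω; simp [Set.indicator]
        rw [h1, integral_indicator_const (1:ℝ) (measurableSet_le hε measurable_const)]
        simp
        rfl

lemma Fmono {Ω : Type*} [MeasurableSpace Ω] (μ : Measure Ω) [IsProbabilityMeasure μ]
    (ε : Ω → ℝ) : Monotone (fun s => (μ {ω | ε ω ≤ s}).toReal) := by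
  intro s t hst
  exact ENNReal.toReal_mono (measure_ne_top _ _)
    (measure_mono (fun ω (h : ε ω ≤ s) => le_trans h hst))

lemma Fint {Ω : Type*} [MeasurableSpace Ω] (μ : Measure Ω) [IsProbabilityMeasure μ]
    (ε : Ω → ℝ) (a b : ℝ) :
    IntegrableOn (fun s => (μ {ω | ε ω ≤ s}).toReal) (Set.Ioc a b) volume := by
  have hfin : IsFiniteMeasure (volume.restrict (Set.Ioc a b)) := by
    constructor
    rw [Measure.restrict_apply_univ, Real.volume_Ioc]
    exact ENNReal.ofReal_lt_top
  refine Integrable.mono' (integrable_const 1)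
    ((Fmono μ ε).measurable.aestronglyMeasurable) ?_
  filter_upwards with s
  rw [Real.norm_eq_abs, abs_of_nonneg ENNReal.toReal_nonneg]
  exact ENNReal.toReal_le_of_le_ofReal one_pos.le (by simpa using prob_le_one)


/-- For a real random variable `ε` with cdf `F(s) = P(ε ≤ s)`, for every `τ ∈ (0,1)` and
`v ∈ ℝ`, the difference `ρ_τ(ε − v) − ρ_τ(ε)` is integrable and
`E[ρ_τ(ε − v) − ρ_τ(ε)] = −v·(τ − F(0)) + ∫₀^v (F(s) − F(0)) ds`. -/
theorem expected_check_loss_difference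
    {Ω : Type*} [MeasurableSpace Ω] (μ : Measure Ω) [IsProbabilityMeasure μ]
    (ε : Ω → ℝ) (hε : Measurable ε) (τ : ℝ) (hτ : τ ∈ Set.Ioo (0 : ℝ) 1) (v : ℝ) :
    Integrable (fun ω => (τ - if ε ω - v ≤ 0 then 1 else 0) * (ε ω - v)
        - (τ - if ε ω ≤ 0 then 1 else 0) * ε ω) μ
    ∧ (∫ ω, ((τ - if ε ω - v ≤ 0 then 1 else 0) * (ε ω - v)
          - (τ - if ε ω ≤ 0 then 1 else 0) * ε ω) ∂μ
        = -v * (τ - (μ {ω | ε ω ≤ 0}).toReal)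
          + ∫ s in (0 : ℝ)..v, ((μ {ω | ε ω ≤ s}).toReal - (μ {ω | ε ω ≤ 0}).toReal)) := by
  set F : ℝ → ℝ := fun s => (μ {ω | ε ω ≤ s}).toReal with hF
  have hpt : ∀ u : ℝ, (τ - if u - v ≤ 0 then 1 else 0) * (u - v)
      - (τ - if u ≤ 0 then 1 else 0) * u
      = -(τ * v) + (max (v - u) 0 - max (0 - u) 0) := by
    intro u
    rcases le_or_gt (u - v) 0 with h1 | h1 <;> rcases le_or_gt u 0 with h2 | h2
    · rw [if_pos h1, if_pos h2, max_eq_left (by linarith), max_eq_left (by linarith)]; ring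
    · rw [if_pos h1, if_neg (not_le.mpr h2), max_eq_left (by linarith),
        max_eq_right (by linarith)]; ring
    · rw [if_neg (not_le.mpr h1), if_pos h2, max_eq_right (by linarith),
        max_eq_left (by linarith)]; ring
    · rw [if_neg (not_le.mpr h1), if_neg (not_le.mpr h2), max_eq_right (by linarith),
        max_eq_right (by linarith)]; ring
  have hfun : (fun ω => (τ - if ε ω - v ≤ 0 then 1 else 0) * (ε ω - v)
      - (τ - if ε ω ≤ 0 then 1 else 0) * ε ω)
      = fun ω => -(τ * v) + (max (v - ε ω) 0 - max (0 - ε ω) 0) := by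
    funext ω; exact hpt (ε ω)
  set g : Ω → ℝ := fun ω => max (v - ε ω) 0 - max (0 - ε ω) 0 with hg
  have hgmeas : Measurable g :=
    ((measurable_const.sub hε).max measurable_const).sub
      ((measurable_const.sub hε).max measurable_const)
  have hgint : Integrable g μ := by
    refine Integrable.mono' (integrable_const |v|) hgmeas.aestronglyMeasurable ?_
    filter_upwards with ω
    rw [Real.norm_eq_abs]
    calc |max (v - ε ω) 0 - max (0 - ε ω) 0| ≤ |(v - ε ω) - (0 - ε ω)| :=
        abs_max_sub_max_le_abs _ _ _
      _ = |v| := by ring_nf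
  have hint : Integrable (fun ω => -(τ * v) + g ω) μ := (integrable_const _).add hgint
  rw [hfun]
  refine ⟨hint, ?_⟩
  rw [integral_add (integrable_const _) hgint, integral_const]
  simp only [measure_univ, measureReal_def, ENNReal.toReal_one, smul_eq_mul, one_mul]
  rcases le_or_gt 0 v with hv | hv
  · have hB : ∫ ω, g ω ∂μ = ∫ s in Set.Ioc 0 v, F s := lemB μ ε hε 0 v hv
    rw [hB, intervalIntegral.integral_of_le hv,
      integral_sub (Fint μ ε 0 v) (integrable_const _), setIntegral_const, measureReal_def,
      Real.volume_Ioc, smul_eq_mul, ENNReal.toReal_ofReal (by linarith)]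
    ring
  · have hB : ∫ ω, (max (0 - ε ω) 0 - max (v - ε ω) 0) ∂μ = ∫ s in Set.Ioc v 0, F s :=
      lemB μ ε hε v 0 hv.le
    have hgB : ∫ ω, g ω ∂μ = -∫ s in Set.Ioc v 0, F s := by
      rw [← hB, ← integral_neg]
      congr 1; funext ω; simp only [hg]; ring
    rw [hgB, intervalIntegral.integral_of_ge hv.le,
      integral_sub (Fint μ ε v 0) (integrable_const _), setIntegral_const, measureReal_def,
      Real.volume_Ioc, smul_eq_mul, ENNReal.toReal_ofReal (by linarith)]
    ring
end

section
/- Let τ ∈ (0,1) and let ε be a real-valued random variable with cumulative distribution function F satisfying F(0) = P(ε ≤ 0) = τ. Then for every v ∈ ℝ, E[ρ_τ(ε − v) − ρ_τ(ε)] = ∫₀^v (F(s) − F(0)) ds ≥ 0; in particular 0 minimizes v ↦ E[ρ_τ(ε − v) − ρ_τ(ε)]. -/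
open MeasureTheory

lemma check_ptwise (τ u v : ℝ) :
    (τ - if u - v ≤ 0 then 1 else 0) * (u - v) - (τ - if u ≤ 0 then 1 else 0) * u
      = -(τ * v) + max (v - u) 0 - max (-u) 0 := by
  have hm1 : max (v - u) 0 = if u - v ≤ 0 then v - u else 0 := by
    split <;> rename_i h
    · exact max_eq_left (by linarith)
    · exact max_eq_right (by push_neg at h; linarith)
  have hm2 : max (-u) 0 = if u ≤ 0 then -u else 0 := by
    split <;> rename_i h
    · exact max_eq_left (by linarith)
    · exact max_eq_right (by push_neg at h; linarith)
  rw [hm1, hm2]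
  split <;> split <;> ring

lemma indicator_interval_integral (u v : ℝ) (hv : 0 ≤ v) :
    (∫ s in (0:ℝ)..v, (if u ≤ s then (1:ℝ) else 0))
      = max (v - u) 0 - max (-u) 0 := by
  have : (fun s => if u ≤ s then (1:ℝ) else 0) = Set.indicator (Set.Ici u) (fun _ => (1:ℝ)) := by
    funext s; simp [Set.indicator_apply, Set.mem_Ici]
  rw [intervalIntegral.integral_of_le hv, this,
    setIntegral_indicator measurableSet_Ici, setIntegral_const, Set.inter_comm]
  rcases le_or_gt u 0 with hu | hu
  · have hset : Set.Ici u ∩ Set.Ioc 0 v = Set.Ioc 0 v := by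
      apply Set.inter_eq_self_of_subset_right
      intro x hx; exact le_trans hu (le_of_lt hx.1)
    rw [hset, measureReal_def, Real.volume_Ioc, smul_eq_mul, mul_one, sub_zero, ENNReal.toReal_ofReal hv,
      max_eq_left (by linarith), max_eq_left (by linarith)]
    ring
  · have hset : Set.Ici u ∩ Set.Ioc 0 v = Set.Icc u v := by
      ext x
      simp only [Set.mem_inter_iff, Set.mem_Ici, Set.mem_Ioc, Set.mem_Icc]
      constructor
      · rintro ⟨h1, _, h3⟩; exact ⟨h1, h3⟩
      · rintro ⟨h1, h2⟩; exact ⟨h1, lt_of_lt_of_le hu h1, h2⟩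
    rw [hset, measureReal_def, Real.volume_Icc]
    rcases le_or_gt u v with huv | huv
    · rw [ENNReal.toReal_ofReal (by linarith), smul_eq_mul, mul_one,
        max_eq_left (by linarith), max_eq_right (by linarith)]
      ring
    · rw [ENNReal.ofReal_of_nonpos (by linarith), max_eq_right (by linarith),
        max_eq_right (by linarith)]
      simp

lemma indicator_interval_integral' (u v : ℝ) :
    (∫ s in (0:ℝ)..v, (if u ≤ s then (1:ℝ) else 0))
      = max (v - u) 0 - max (-u) 0 := by
  rcases le_or_gt 0 v with hv | hv
  · exact indicator_interval_integral u v hv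
  · have h1 : (∫ s in (0:ℝ)..v, (if u ≤ s then (1:ℝ) else 0))
        = -(∫ s in v..(0:ℝ), (if u ≤ s then (1:ℝ) else 0)) :=
      intervalIntegral.integral_symm v 0
    have h2 : (∫ s in v..(0:ℝ), (if u ≤ s then (1:ℝ) else 0))
        = ∫ s in (0:ℝ)..(-v), (if u ≤ s + v then (1:ℝ) else 0) := by
      rw [intervalIntegral.integral_comp_add_right (fun s => if u ≤ s then (1:ℝ) else 0) v]
      norm_num
    have h3 : (∫ s in (0:ℝ)..(-v), (if u ≤ s + v then (1:ℝ) else 0))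
        = max (-v - (u - v)) 0 - max (-(u - v)) 0 := by
      have := indicator_interval_integral (u - v) (-v) (by linarith)
      simpa [sub_le_iff_le_add] using this
    rw [h1, h2, h3]
    have e1 : -v - (u - v) = -u := by ring
    have e2 : -(u - v) = v - u := by ring
    rw [e1, e2]; ring

/-- If the cdf of `ε` satisfies `F(0) = P(ε ≤ 0) = τ`, then for every `v ∈ ℝ`,
`E[ρ_τ(ε − v) − ρ_τ(ε)] = ∫₀^v (F(s) − F(0)) ds ≥ 0`; in particular `0` minimizes
`v ↦ E[ρ_τ(ε − v) − ρ_τ(ε)]`. -/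
theorem expected_check_loss_nonneg_at_quantile
    {Ω : Type*} [MeasurableSpace Ω] (μ : Measure Ω) [IsProbabilityMeasure μ]
    (ε : Ω → ℝ) (hε : Measurable ε) (τ : ℝ) (hτ : τ ∈ Set.Ioo (0 : ℝ) 1)
    (hquantile : (μ {ω | ε ω ≤ 0}).toReal = τ) (v : ℝ) :
    (∫ ω, ((τ - if ε ω - v ≤ 0 then 1 else 0) * (ε ω - v)
          - (τ - if ε ω ≤ 0 then 1 else 0) * ε ω) ∂μ
        = ∫ s in (0 : ℝ)..v, ((μ {ω | ε ω ≤ s}).toReal - (μ {ω | ε ω ≤ 0}).toReal))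
    ∧ 0 ≤ ∫ ω, ((τ - if ε ω - v ≤ 0 then 1 else 0) * (ε ω - v)
          - (τ - if ε ω ≤ 0 then 1 else 0) * ε ω) ∂μ := by
  set F : ℝ → ℝ := fun s => (μ {ω | ε ω ≤ s}).toReal with hF
  -- monotonicity of F
  have hFmono : Monotone F := by
    intro s t hst
    exact ENNReal.toReal_mono (measure_ne_top μ _)
      (measure_mono (fun ω (h : ε ω ≤ s) => le_trans h hst))
  -- diff function
  set g : Ω → ℝ := fun ω => max (v - ε ω) 0 - max (-ε ω) 0 with hg
  have hgmeas : Measurable g := by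
    apply Measurable.sub
    · exact (measurable_const.sub hε).max measurable_const
    · exact hε.neg.max measurable_const
  have hgbdd : ∀ ω, ‖g ω‖ ≤ |v| := by
    intro ω
    have := abs_max_sub_max_le_abs (v - ε ω) (-ε ω) 0
    simpa [hg, Real.norm_eq_abs, sub_neg_eq_add, sub_add_cancel] using this
  have hgint : Integrable g μ := by
    exact Integrable.mono' (integrable_const |v|) hgmeas.aestronglyMeasurable
      (Filter.Eventually.of_forall hgbdd)
  -- pointwise rewrite of the integrand
  have hpt : ∀ ω, ((τ - if ε ω - v ≤ 0 then 1 else 0) * (ε ω - v)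
          - (τ - if ε ω ≤ 0 then 1 else 0) * ε ω) = -(τ * v) + g ω := by
    intro ω
    have := check_ptwise τ (ε ω) v
    simp only [hg]; linarith [this]
  have hLHS : (∫ ω, ((τ - if ε ω - v ≤ 0 then 1 else 0) * (ε ω - v)
          - (τ - if ε ω ≤ 0 then 1 else 0) * ε ω) ∂μ)
      = -(τ * v) + ∫ ω, g ω ∂μ := by
    rw [show (fun ω => ((τ - if ε ω - v ≤ 0 then 1 else 0) * (ε ω - v)
          - (τ - if ε ω ≤ 0 then 1 else 0) * ε ω)) = fun ω => -(τ * v) + g ω from funext hpt]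
    rw [integral_add (integrable_const _) hgint, integral_const]
    simp
  -- Fubini step : for a ≤ b, ∫_{Ioc a b} F = ∫ ω ∫_{Ioc a b} indicator
  have hfub : ∀ a b : ℝ, a ≤ b →
      (∫ s in Set.Ioc a b, F s)
        = ∫ ω, (∫ s in Set.Ioc a b, (if ε ω ≤ s then (1:ℝ) else 0)) ∂μ := by
    intro a b hab
    haveI : IsFiniteMeasure (volume.restrict (Set.Ioc a b)) := by
      constructor
      rw [Measure.restrict_apply_univ, Real.volume_Ioc]
      exact ENNReal.ofReal_lt_top
    have hmeas : Measurable (Function.uncurry fun (s : ℝ) (ω : Ω) =>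
        (if ε ω ≤ s then (1:ℝ) else 0)) := by
      have hset : MeasurableSet {p : ℝ × Ω | ε p.2 ≤ p.1} :=
        measurableSet_le (hε.comp measurable_snd) measurable_fst
      have : (Function.uncurry fun (s : ℝ) (ω : Ω) => (if ε ω ≤ s then (1:ℝ) else 0))
          = fun p : ℝ × Ω => if p ∈ {p : ℝ × Ω | ε p.2 ≤ p.1} then (1:ℝ) else 0 := rfl
      rw [this]
      exact Measurable.ite hset measurable_const measurable_const
    have hint : Integrable (Function.uncurry fun (s : ℝ) (ω : Ω) =>
        (if ε ω ≤ s then (1:ℝ) else 0)) ((volume.restrict (Set.Ioc a b)).prod μ) := by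
      apply Integrable.mono' (integrable_const (1:ℝ)) hmeas.aestronglyMeasurable
      refine Filter.Eventually.of_forall fun p => ?_
      by_cases h : ε p.2 ≤ p.1 <;> simp [Function.uncurry, h]
    have hswap := integral_integral_swap hint
    have hFs : ∀ s : ℝ, F s = ∫ ω, (if ε ω ≤ s then (1:ℝ) else 0) ∂μ := by
      intro s
      have hms : MeasurableSet {ω | ε ω ≤ s} := hε measurableSet_Iic
      show μ.real {ω | ε ω ≤ s} = _
      rw [← integral_indicator_one hms]
      refine integral_congr_ae (Filter.Eventually.of_forall fun ω => ?_)
      by_cases h : ε ω ≤ s <;> simp [Set.indicator_apply, h, Set.mem_setOf_eq]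
    calc (∫ s in Set.Ioc a b, F s)
        = ∫ s in Set.Ioc a b, (∫ ω, (if ε ω ≤ s then (1:ℝ) else 0) ∂μ) := by
          exact setIntegral_congr_fun measurableSet_Ioc (fun s _ => hFs s)
      _ = ∫ ω, (∫ s in Set.Ioc a b, (if ε ω ≤ s then (1:ℝ) else 0)) ∂μ := hswap
  -- key identity: ∫ s in 0..v, F s = ∫ g
  have hkey : (∫ s in (0:ℝ)..v, F s) = ∫ ω, g ω ∂μ := by
    rcases le_or_gt 0 v with hv | hv
    · rw [intervalIntegral.integral_of_le hv, hfub 0 v hv]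
      refine integral_congr_ae (Filter.Eventually.of_forall fun ω => ?_)
      show (∫ s in Set.Ioc 0 v, (if ε ω ≤ s then (1:ℝ) else 0)) = g ω
      rw [← intervalIntegral.integral_of_le hv, indicator_interval_integral' (ε ω) v]
    · rw [intervalIntegral.integral_symm, intervalIntegral.integral_of_le hv.le,
        hfub v 0 hv.le, ← integral_neg]
      refine integral_congr_ae (Filter.Eventually.of_forall fun ω => ?_)
      show -(∫ s in Set.Ioc v 0, (if ε ω ≤ s then (1:ℝ) else 0)) = g ω
      rw [← intervalIntegral.integral_of_le hv.le, ← intervalIntegral.integral_symm,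
        indicator_interval_integral' (ε ω) v]
  -- interval integrability of F
  have hFint : ∀ a b : ℝ, IntervalIntegrable F volume a b := fun a b =>
    (hFmono.monotoneOn _).intervalIntegrable
  -- RHS decomposition
  have hRHS : (∫ s in (0:ℝ)..v, (F s - F 0)) = (∫ s in (0:ℝ)..v, F s) - v * τ := by
    rw [intervalIntegral.integral_sub (hFint 0 v) intervalIntegrable_const,
      intervalIntegral.integral_const]
    rw [show F 0 = τ from hquantile]
    simp [smul_eq_mul]
  have heq : (∫ ω, ((τ - if ε ω - v ≤ 0 then 1 else 0) * (ε ω - v)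
          - (τ - if ε ω ≤ 0 then 1 else 0) * ε ω) ∂μ)
      = ∫ s in (0:ℝ)..v, (F s - F 0) := by
    rw [hLHS, hRHS, hkey]; ring
  refine ⟨heq, ?_⟩
  rw [heq]
  rcases le_or_gt 0 v with hv | hv
  · apply intervalIntegral.integral_nonneg hv
    intro s hs
    have := hFmono hs.1
    linarith
  · rw [intervalIntegral.integral_symm]
    have hle : (∫ s in v..(0:ℝ), (F s - F 0)) ≤ (∫ s in v..(0:ℝ), (0:ℝ)) := by
      apply intervalIntegral.integral_mono_on hv.le
        ((hFint v 0).sub intervalIntegrable_const) intervalIntegrable_const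
      intro s hs
      have := hFmono hs.2
      linarith
    simp only [intervalIntegral.integral_zero] at hle
    linarith
end

section
/- Let μ be a probability measure on α × ℝ, where α is a measurable space, let τ ∈ (0,1), and let F(x, t) denote the conditional cumulative distribution function of the second coordinate given the first (Mathlib's condCDF). Suppose that for μ-first-marginal-almost every x, F(x, 0) = τ. Then for every bounded measurable function g : α → ℝ, ∫ [ρ_τ(y − g(x)) − ρ_τ(y)] dμ(x,y) = ∫_α [∫₀^{g(x)} (F(x, s) − τ) ds] dμ_1(x), where μ_1 is the first marginal of μ and the inner integral is oriented; in particular this quantity is nonnegative. -/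
open MeasureTheory ProbabilityTheory

/-- Knight's identity, algebraic closed form. -/
lemma knight_closed_form (τ y a : ℝ) :
    (τ - if y - a ≤ 0 then (1:ℝ) else 0) * (y - a) - (τ - if y ≤ 0 then (1:ℝ) else 0) * y
      = max (a - y) 0 - max (0 - y) 0 - τ * a := by
  rcases le_or_gt (y - a) 0 with h1 | h1 <;> rcases le_or_gt y 0 with h2 | h2
  · rw [if_pos h1, if_pos h2, max_eq_left (by linarith), max_eq_left (by linarith)]; ring
  · rw [if_pos h1, if_neg (not_le.mpr h2), max_eq_left (by linarith),
      max_eq_right (by linarith)]; ring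
  · rw [if_neg (not_le.mpr h1), if_pos h2, max_eq_right (by linarith),
      max_eq_left (by linarith)]; ring
  · rw [if_neg (not_le.mpr h1), if_neg (not_le.mpr h2), max_eq_right (by linarith),
      max_eq_right (by linarith)]; ring

lemma step_intervalIntegrable (y c d : ℝ) :
    IntervalIntegrable (fun s => if y ≤ s then (1:ℝ) else 0) MeasureTheory.volume c d := by
  apply Monotone.intervalIntegrable
  intro s t hst
  dsimp only
  split_ifs with h1 h2
  · exact le_refl _
  · exact absurd (h1.trans hst) h2
  · norm_num
  · exact le_refl _

/-- Integral of the step function `1{y ≤ s}` over `0..a`. -/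
lemma integral_step (y a : ℝ) :
    ∫ s in (0:ℝ)..a, (if y ≤ s then (1:ℝ) else 0) = max (a - y) 0 - max (0 - y) 0 := by
  have hcont : Continuous (fun s : ℝ => max (s - y) 0) :=
    (continuous_id.sub continuous_const).max continuous_const
  have hderiv : ∀ x ∈ Set.Ioo (min 0 a) (max 0 a),
      HasDerivWithinAt (fun s : ℝ => max (s - y) 0) (if y ≤ x then (1:ℝ) else 0)
        (Set.Ioi x) x := by
    intro x _
    rcases lt_trichotomy x y with h | h | h
    · rw [if_neg (not_le.mpr h)]
      refine (hasDerivAt_const x (0:ℝ)).hasDerivWithinAt.congr_of_eventuallyEq ?_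
        (by rw [max_eq_right (by linarith)])
      filter_upwards [(eventually_lt_nhds h).filter_mono nhdsWithin_le_nhds] with s hs
      rw [max_eq_right (by linarith)]
    · rw [if_pos h.ge]
      refine (((hasDerivAt_id x).sub_const y).hasDerivWithinAt).congr ?_ ?_
      · intro s hs
        simp only [id_eq]
        rw [max_eq_left (by simp only [Set.mem_Ioi] at hs; linarith)]
      · simp [h]
    · rw [if_pos h.le]
      refine (((hasDerivAt_id x).sub_const y).hasDerivWithinAt).congr_of_eventuallyEq ?_
        (by simp only [id_eq]; rw [max_eq_left (by linarith)])
      filter_upwards [((eventually_gt_nhds h).filter_mono nhdsWithin_le_nhds :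
        ∀ᶠ s in nhdsWithin x (Set.Ioi x), y < s)] with s hs
      simp only [id_eq]
      rw [max_eq_left (by linarith)]
  have := intervalIntegral.integral_eq_sub_of_hasDeriv_right hcont.continuousOn hderiv
    (step_intervalIntegrable y 0 a)
  rw [this]

/-- Fubini step: exchange an integral against `ν` with an interval integral. -/
lemma integral_interval_step (ν : Measure ℝ) [IsProbabilityMeasure ν] (τ a : ℝ) :
    ∫ y, (max (a - y) 0 - max (0 - y) 0 - τ * a) ∂ν
      = ∫ s in (0:ℝ)..a, ((ν (Set.Iic s)).toReal - τ) := by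
  have hrw : ∀ y : ℝ, max (a - y) 0 - max (0 - y) 0 - τ * a
      = ∫ s in (0:ℝ)..a, ((if y ≤ s then (1:ℝ) else 0) - τ) := by
    intro y
    rw [intervalIntegral.integral_sub (step_intervalIntegrable y 0 a)
      (intervalIntegrable_const), integral_step, intervalIntegral.integral_const]
    simp only [sub_zero, smul_eq_mul]
    ring
  simp_rw [hrw]
  have hinner : ∀ s : ℝ, ∫ y, ((if y ≤ s then (1:ℝ) else 0) - τ) ∂ν
      = (ν (Set.Iic s)).toReal - τ := by
    intro s
    have hind : (fun y => if y ≤ s then (1:ℝ) else 0)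
        = (Set.Iic s).indicator (fun _ => (1:ℝ)) := by
      ext y; simp [Set.indicator_apply, Set.mem_Iic]
    rw [integral_sub ?_ (integrable_const τ), integral_const]
    · rw [hind, integral_indicator_const (1:ℝ) measurableSet_Iic]
      simp [measure_univ, measureReal_def]
    · rw [hind]
      exact (integrable_const (1:ℝ)).indicator measurableSet_Iic
  have key : ∀ c d : ℝ,
      ∫ y, (∫ s in Set.Ioc c d, ((if y ≤ s then (1:ℝ) else 0) - τ)) ∂ν
        = ∫ s in Set.Ioc c d, ((ν (Set.Iic s)).toReal - τ) := by
    intro c d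
    haveI : IsFiniteMeasure (volume.restrict (Set.Ioc c d)) :=
      ⟨by rw [Measure.restrict_apply MeasurableSet.univ, Set.univ_inter, Real.volume_Ioc]
          exact ENNReal.ofReal_lt_top⟩
    have hmeas : Measurable (fun p : ℝ × ℝ => ((if p.1 ≤ p.2 then (1:ℝ) else 0) - τ)) := by
      exact (Measurable.ite (measurableSet_le measurable_fst measurable_snd)
        measurable_const measurable_const).sub measurable_const
    have hint : Integrable (Function.uncurry fun y s => ((if y ≤ s then (1:ℝ) else 0) - τ))
        (ν.prod (volume.restrict (Set.Ioc c d))) := by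
      refine Integrable.mono' (integrable_const (1 + |τ|)) ?_ (ae_of_all _ ?_)
      · exact hmeas.aestronglyMeasurable
      · intro p
        simp only [Function.uncurry, Real.norm_eq_abs]
        refine (abs_sub _ _).trans ?_
        gcongr
        split_ifs <;> norm_num
    have hswap := MeasureTheory.integral_integral_swap hint
    rw [hswap]
    exact setIntegral_congr_fun measurableSet_Ioc (fun s _ => hinner s)
  rcases le_total 0 a with h | h
  · rw [intervalIntegral.integral_of_le h]
    simp_rw [intervalIntegral.integral_of_le h]
    exact key 0 a
  · rw [intervalIntegral.integral_of_ge h]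
    simp_rw [intervalIntegral.integral_of_ge h]
    rw [integral_neg]
    exact congrArg Neg.neg (key a 0)

/-- Disintegration of an integral using the conditional CDF measures. -/
lemma integral_condCDF_measure {α : Type*} [MeasurableSpace α] (μ : Measure (α × ℝ))
    [IsProbabilityMeasure μ] {f : α × ℝ → ℝ} (hf : Integrable f μ) :
    ∫ p, f p ∂μ = ∫ x, ∫ y, f (x, y) ∂((condCDF μ x).measure) ∂μ.fst := by
  have hCDF := isCondKernelCDF_condCDF μ
  set κ0 : Kernel (Unit × α) ℝ := hCDF.toKernel _ with hκ0
  haveI : IsMarkovKernel κ0 := by rw [hκ0]; infer_instance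
  set κ : Kernel α ℝ := κ0.comap (fun a => ((), a)) measurable_prodMk_left with hκ
  haveI : IsMarkovKernel κ := by
    constructor; intro a; rw [hκ, Kernel.comap_apply]; exact IsMarkovKernel.isProbabilityMeasure _
  have hκ_apply : ∀ x : α, κ x = (condCDF μ x).measure := by
    intro x
    rw [hκ, Kernel.comap_apply, hκ0, IsCondKernelCDF.toKernel_apply]
  have hprod : Kernel.prodMkLeft Unit κ = κ0 := by
    ext p s hs
    rw [Kernel.prodMkLeft_apply, hκ, Kernel.comap_apply]
  have hdis : μ.fst ⊗ₘ κ = μ := by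
    rw [Measure.compProd, hprod, hκ0, ProbabilityTheory.compProd_toKernel hCDF,
      Kernel.const_apply]
  conv_lhs => rw [← hdis]
  rw [Measure.integral_compProd (by rw [hdis]; exact hf)]
  exact integral_congr_ae (ae_of_all _ fun x => by simp only []; rw [hκ_apply x])

/-- Excess final prediction error representation via the conditional cdf: if the
conditional cdf `F(x,·) = condCDF μ x` satisfies `F(x,0) = τ` for almost every `x`
(w.r.t. the first marginal), then for every bounded measurable `g`,
`∫ [ρ_τ(y − g(x)) − ρ_τ(y)] dμ(x,y) = ∫ ∫₀^{g(x)} (F(x,s) − τ) ds dμ₁(x) ≥ 0`. -/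
theorem efpe_representation_condCDF
    {α : Type*} [MeasurableSpace α] (μ : Measure (α × ℝ)) [IsProbabilityMeasure μ]
    (τ : ℝ) (hτ : τ ∈ Set.Ioo (0 : ℝ) 1)
    (hq : ∀ᵐ x ∂μ.fst, condCDF μ x 0 = τ)
    (g : α → ℝ) (hg : Measurable g) (M : ℝ) (hM : ∀ x, |g x| ≤ M) :
    (∫ p : α × ℝ, ((τ - if p.2 - g p.1 ≤ 0 then 1 else 0) * (p.2 - g p.1)
          - (τ - if p.2 ≤ 0 then 1 else 0) * p.2) ∂μ
        = ∫ x, (∫ s in (0 : ℝ)..(g x), (condCDF μ x s - τ)) ∂μ.fst)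
    ∧ 0 ≤ ∫ x, (∫ s in (0 : ℝ)..(g x), (condCDF μ x s - τ)) ∂μ.fst := by
  have hnn : 0 ≤ ∫ x, (∫ s in (0 : ℝ)..(g x), (condCDF μ x s - τ)) ∂μ.fst := by
    apply integral_nonneg_of_ae
    filter_upwards [hq] with x hx
    simp only [Pi.zero_apply]
    rcases le_total 0 (g x) with h | h
    · apply intervalIntegral.integral_nonneg h
      intro u hu
      have : condCDF μ x 0 ≤ condCDF μ x u := (condCDF μ x).mono hu.1
      simp only [sub_nonneg]
      linarith
    · rw [intervalIntegral.integral_symm]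
      have hle : ∫ s in (g x)..(0:ℝ), (condCDF μ x s - τ) ≤ 0 := by
        have hmono : Monotone (fun s => condCDF μ x s - τ) :=
          fun u v huv => sub_le_sub_right ((condCDF μ x).mono huv) τ
        have hii : IntervalIntegrable (fun s => condCDF μ x s - τ) volume (g x) 0 :=
          hmono.intervalIntegrable
        have hle0 := intervalIntegral.integral_mono_on h hii
          (intervalIntegrable_const (c := (0:ℝ))) (fun u hu => by
            have : condCDF μ x u ≤ condCDF μ x 0 := (condCDF μ x).mono hu.2
            linarith)
        simpa using hle0
      linarith
  refine ⟨?_, hnn⟩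
  have hfun : (fun p : α × ℝ => ((τ - if p.2 - g p.1 ≤ 0 then (1:ℝ) else 0) * (p.2 - g p.1)
      - (τ - if p.2 ≤ 0 then (1:ℝ) else 0) * p.2))
      = fun p => (max (g p.1 - p.2) 0 - max (0 - p.2) 0 - τ * g p.1) :=
    funext fun p => knight_closed_form τ p.2 (g p.1)
  have hCmeas : Measurable (fun p : α × ℝ =>
      (max (g p.1 - p.2) 0 - max (0 - p.2) 0 - τ * g p.1)) := by
    exact ((((hg.comp measurable_fst).sub measurable_snd).max measurable_const).sub
      ((measurable_const.sub measurable_snd).max measurable_const)).sub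
      (measurable_const.mul (hg.comp measurable_fst))
  have hCint : Integrable (fun p : α × ℝ =>
      (max (g p.1 - p.2) 0 - max (0 - p.2) 0 - τ * g p.1)) μ := by
    refine Integrable.mono' (integrable_const (|M| + |τ| * |M|)) hCmeas.aestronglyMeasurable
      (ae_of_all _ ?_)
    intro p
    simp only [Real.norm_eq_abs]
    have h1 : |max (g p.1 - p.2) 0 - max (0 - p.2) 0| ≤ |g p.1| := by
      have := abs_max_sub_max_le_abs (g p.1 - p.2) (0 - p.2) 0
      simpa using this
    have h2 : |τ * g p.1| = |τ| * |g p.1| := abs_mul _ _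
    have h3 : |g p.1| ≤ |M| := (hM p.1).trans (le_abs_self M)
    calc |max (g p.1 - p.2) 0 - max (0 - p.2) 0 - τ * g p.1|
        ≤ |max (g p.1 - p.2) 0 - max (0 - p.2) 0| + |τ * g p.1| := abs_sub _ _
      _ ≤ |M| + |τ| * |M| := by
          rw [h2]
          have : |τ| * |g p.1| ≤ |τ| * |M| := by
            apply mul_le_mul_of_nonneg_left h3 (abs_nonneg τ)
          linarith
  rw [hfun, integral_condCDF_measure μ hCint]
  apply integral_congr_ae (ae_of_all _ _)
  intro x
  rw [integral_interval_step _ τ (g x)]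
  apply intervalIntegral.integral_congr
  intro s _
  show ((condCDF μ x).measure (Set.Iic s)).toReal - τ = condCDF μ x s - τ
  rw [measure_condCDF_Iic, ENNReal.toReal_ofReal (condCDF_nonneg μ x s)]
end

section
/- Let x₁, …, x_n be points in a set α, let J ≥ 1 be an integer, ρ₁ > 0, and let h : Δ_J → (α → ℝ) satisfy the empirical Lipschitz condition ‖h(w) − h(w′)‖_{P_n} ≤ ρ₁·‖w − w′‖₁ for all w, w′ ∈ Δ_J. Then for every u with 0 < u ≤ ρ₁, the u-covering number of the class H = {h(w) : w ∈ Δ_J} with respect to ‖·‖_{P_n} is at most (1 + 4ρ₁/u)^{J−1}. -/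
open MeasureTheory Metric
open scoped ENNReal

lemma sep_card_bound {d : ℕ} (hd : 0 < d) {r : ℝ} (hr : 0 < r)
    (S : Finset (PiLp 1 (fun _ : Fin d => ℝ)))
    (hS1 : ∀ p ∈ S, ‖p‖ ≤ 1)
    (hsep : ∀ p ∈ S, ∀ q ∈ S, p ≠ q → r ≤ dist p q) :
    (S.card : ℝ) ≤ (1 + 2 / r) ^ d := by
  haveI : Inhabited (Fin d) := ⟨⟨0, hd⟩⟩
  haveI : Nontrivial (PiLp 1 (fun _ : Fin d => ℝ)) := inferInstance
  letI : MeasurableSpace (PiLp 1 (fun _ : Fin d => ℝ)) := inferInstance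
  haveI : BorelSpace (PiLp 1 (fun _ : Fin d => ℝ)) := inferInstance
  haveI : FiniteDimensional ℝ (PiLp 1 (fun _ : Fin d => ℝ)) := inferInstance
  let b := Module.finBasis ℝ (PiLp 1 (fun _ : Fin d => ℝ))
  let μ : Measure (PiLp 1 (fun _ : Fin d => ℝ)) := b.addHaar
  haveI : μ.IsAddHaarMeasure := isAddHaarMeasure_basis_addHaar b
  have hdim : Module.finrank ℝ (PiLp 1 (fun _ : Fin d => ℝ)) = d := by
    simpa using (WithLp.linearEquiv 1 ℝ (Fin d → ℝ)).finrank_eq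
  have hr2 : (0:ℝ) < r / 2 := by linarith
  have hdisj : (S : Set (PiLp 1 (fun _ : Fin d => ℝ))).PairwiseDisjoint
      (fun p => ball p (r/2)) := by
    intro p hp q hq hpq
    apply ball_disjoint_ball
    calc r/2 + r/2 = r := by ring
    _ ≤ dist p q := hsep p hp q hq hpq
  have hsub : ∀ p ∈ S, ball p (r/2) ⊆ ball (0 : PiLp 1 (fun _ : Fin d => ℝ)) (1 + r/2) := by
    intro p hp y hy
    have h1 : dist y p < r/2 := mem_ball.1 hy
    have hp1 : dist p (0 : PiLp 1 (fun _ : Fin d => ℝ)) ≤ 1 := by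
      simpa [dist_zero_right] using hS1 p hp
    have : dist y (0 : PiLp 1 (fun _ : Fin d => ℝ)) < 1 + r/2 := by
      calc dist y 0 ≤ dist y p + dist p 0 := dist_triangle _ _ _
      _ < r/2 + 1 := by linarith
      _ = 1 + r/2 := by ring
    exact mem_ball.2 (by simpa [dist_zero_right] using this)
  have hsum : ∑ p ∈ S, μ (ball p (r/2)) ≤ μ (ball (0 : PiLp 1 (fun _ : Fin d => ℝ)) (1 + r/2)) := by
    rw [← measure_biUnion_finset hdisj (fun _ _ => measurableSet_ball)]
    exact measure_mono (Set.iUnion₂_subset hsub)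
  have hball : ∀ p : PiLp 1 (fun _ : Fin d => ℝ),
      μ (ball p (r/2)) = ENNReal.ofReal ((r/2) ^ d) * μ (ball 0 1) := by
    intro p
    rw [Measure.addHaar_ball μ p hr2.le, hdim]
  have hbig : μ (ball (0 : PiLp 1 (fun _ : Fin d => ℝ)) (1 + r/2))
      = ENNReal.ofReal ((1 + r/2) ^ d) * μ (ball 0 1) := by
    rw [Measure.addHaar_ball μ _ (by linarith : (0:ℝ) ≤ 1 + r/2), hdim]
  have hpos : 0 < μ (ball (0 : PiLp 1 (fun _ : Fin d => ℝ)) 1) := measure_ball_pos μ _ one_pos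
  have hfin : μ (ball (0 : PiLp 1 (fun _ : Fin d => ℝ)) 1) ≠ ⊤ := measure_ball_lt_top.ne
  have key : ((S.card : ℝ≥0∞)) * ENNReal.ofReal ((r/2) ^ d) ≤ ENNReal.ofReal ((1 + r/2) ^ d) := by
    rw [← ENNReal.mul_le_mul_iff_left hpos.ne' hfin]
    calc (S.card : ℝ≥0∞) * ENNReal.ofReal ((r/2) ^ d) * μ (ball 0 1)
        = ∑ p ∈ S, μ (ball p (r/2)) := by
          simp only [hball, Finset.sum_const, nsmul_eq_mul, mul_assoc]
    _ ≤ μ (ball (0 : PiLp 1 (fun _ : Fin d => ℝ)) (1 + r/2)) := hsum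
    _ = ENNReal.ofReal ((1 + r/2) ^ d) * μ (ball 0 1) := hbig
  have hreal : (S.card : ℝ) * (r/2) ^ d ≤ (1 + r/2) ^ d := by
    have := (ENNReal.ofReal_le_ofReal_iff (by positivity)).2 le_rfl
    rw [show ((S.card : ℝ≥0∞)) = ENNReal.ofReal (S.card : ℝ) by simp,
      ← ENNReal.ofReal_mul (by positivity)] at key
    exact (ENNReal.ofReal_le_ofReal_iff (by positivity)).1 key
  have hpow : (1 + r/2) ^ d = (1 + 2/r) ^ d * (r/2) ^ d := by
    rw [← mul_pow]
    congr 1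
    field_simp
    ring
  rw [hpow] at hreal
  exact le_of_mul_le_mul_right hreal (by positivity)

-- helper: ℓ¹ norm on PiLp 1
lemma l1norm_eq {d : ℕ} (f : Fin d → ℝ) :
    ‖(WithLp.equiv 1 (Fin d → ℝ)).symm f‖ = ∑ j, |f j| := by
  rw [PiLp.norm_eq_sum (by norm_num)]
  simp [Real.norm_eq_abs]

section main
variable {d : ℕ}

-- separated set card bound in the simplex
lemma simplex_sep_card {ε : ℝ} (hε : 0 < ε) (hd : 0 < d)
    (t : Finset (Fin (d+1) → ℝ))
    (hΔ : ∀ p ∈ t, (∀ j, 0 ≤ p j) ∧ ∑ j, p j = 1)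
    (hsep : ∀ p ∈ t, ∀ q ∈ t, p ≠ q → ε ≤ ∑ j, |p j - q j|) :
    (t.card : ℝ) ≤ (1 + 4 / ε) ^ d := by
  classical
  set φ : (Fin (d+1) → ℝ) → PiLp 1 (fun _ : Fin d => ℝ) :=
    fun w => (WithLp.equiv 1 (Fin d → ℝ)).symm (fun j => w j.castSucc) with hφ
  have hφdist : ∀ w p : Fin (d+1) → ℝ, ‖φ w - φ p‖ = ∑ j : Fin d, |w j.castSucc - p j.castSucc| := by
    intro w p
    have : φ w - φ p = (WithLp.equiv 1 (Fin d → ℝ)).symm (fun j => w j.castSucc - p j.castSucc) := rfl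
    rw [this, l1norm_eq]
  have hl1 : ∀ w p : Fin (d+1) → ℝ,
      ((∀ j, 0 ≤ w j) ∧ ∑ j, w j = 1) → ((∀ j, 0 ≤ p j) ∧ ∑ j, p j = 1) →
      ∑ j, |w j - p j| ≤ 2 * ‖φ w - φ p‖ := by
    intro w p hw hp
    rw [hφdist]
    rw [Fin.sum_univ_castSucc (f := fun j => |w j - p j|)]
    have hsw : w (Fin.last d) = 1 - ∑ j : Fin d, w j.castSucc := by
      have := hw.2; rw [Fin.sum_univ_castSucc] at this; linarith
    have hsp : p (Fin.last d) = 1 - ∑ j : Fin d, p j.castSucc := by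
      have := hp.2; rw [Fin.sum_univ_castSucc] at this; linarith
    have hlast : |w (Fin.last d) - p (Fin.last d)| ≤ ∑ j : Fin d, |w j.castSucc - p j.castSucc| := by
      rw [hsw, hsp]
      have : (1 - ∑ j : Fin d, w j.castSucc) - (1 - ∑ j : Fin d, p j.castSucc)
          = ∑ j : Fin d, (p j.castSucc - w j.castSucc) := by
        rw [Finset.sum_sub_distrib]; ring
      rw [this]
      refine (Finset.abs_sum_le_sum_abs _ _).trans ?_
      apply le_of_eq
      exact Finset.sum_congr rfl fun j _ => abs_sub_comm _ _
    linarith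
  have hinj : Set.InjOn φ t := by
    intro p hp q hq hpq
    by_contra hne
    have h1 := hsep p hp q hq hne
    have h2 := hl1 p q (hΔ p hp) (hΔ q hq)
    rw [hpq, sub_self, norm_zero] at h2
    linarith
  have hcard : (t.image φ).card = t.card := Finset.card_image_of_injOn hinj
  have := sep_card_bound hd (by linarith : (0:ℝ) < ε/2) (t.image φ)
    (by
      intro s hs
      obtain ⟨p, hp, rfl⟩ := Finset.mem_image.1 hs
      have hΔp := hΔ p hp
      rw [hφ]
      rw [l1norm_eq]
      calc ∑ j : Fin d, |p j.castSucc| = ∑ j : Fin d, p j.castSucc :=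
            Finset.sum_congr rfl fun j _ => abs_of_nonneg (hΔp.1 _)
      _ ≤ ∑ j, p j := by
          rw [Fin.sum_univ_castSucc (f := fun j => p j)]
          have := hΔp.1 (Fin.last d); linarith
      _ = 1 := hΔp.2)
    (by
      intro s hs s' hs' hne
      obtain ⟨p, hp, rfl⟩ := Finset.mem_image.1 hs
      obtain ⟨q, hq, rfl⟩ := Finset.mem_image.1 hs'
      have hpq : p ≠ q := fun hh => hne (by rw [hh])
      have h1 := hsep p hp q hq hpq
      have h2 := hl1 p q (hΔ p hp) (hΔ q hq)
      rw [dist_eq_norm]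
      linarith)
  rw [hcard] at this
  refine this.trans (le_of_eq ?_)
  congr 1
  rw [div_div_eq_mul_div]
  norm_num
end main
lemma simplex_net {d : ℕ} {ε : ℝ} (hε : 0 < ε) (hd : 0 < d) :
    ∃ P : Finset (Fin (d+1) → ℝ),
      (P.card : ℝ) ≤ (1 + 4 / ε) ^ d ∧
      (∀ p ∈ P, (∀ j, 0 ≤ p j) ∧ ∑ j, p j = 1) ∧
      ∀ w : Fin (d+1) → ℝ, ((∀ j, 0 ≤ w j) ∧ ∑ j, w j = 1) →
        ∃ p ∈ P, ∑ j, |w j - p j| ≤ ε := by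
  classical
  set Δ : Set (Fin (d+1) → ℝ) := {w | (∀ j, 0 ≤ w j) ∧ ∑ j, w j = 1} with hΔdef
  set Sep : Set (Set (Fin (d+1) → ℝ)) :=
    {M | M ⊆ Δ ∧ M.Pairwise fun p q => ε ≤ ∑ j, |p j - q j|} with hSepdef
  have hsymm : Symmetric (fun p q : Fin (d+1) → ℝ => ε ≤ ∑ j, |p j - q j|) := by
    intro p q hpq
    have : ∑ j, |q j - p j| = ∑ j, |p j - q j| :=
      Finset.sum_congr rfl fun j _ => abs_sub_comm _ _
    rw [this]; exact hpq
  obtain ⟨M, hM⟩ := zorn_subset Sep (by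
    intro c hc hchain
    refine ⟨⋃₀ c, ⟨?_, ?_⟩, fun s hs => Set.subset_sUnion_of_mem hs⟩
    · intro w hw
      obtain ⟨s, hs, hws⟩ := hw
      exact (hc hs).1 hws
    · intro p hp q hq hne
      obtain ⟨s1, hs1, hp1⟩ := hp
      obtain ⟨s2, hs2, hq2⟩ := hq
      rcases hchain.total hs1 hs2 with hss | hss
      · exact (hc hs2).2 (hss hp1) hq2 hne
      · exact (hc hs1).2 hp1 (hss hq2) hne)
  have hMΔ : M ⊆ Δ := hM.prop.1
  have hMsep : M.Pairwise fun p q => ε ≤ ∑ j, |p j - q j| := hM.prop.2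
  have hbound : ∀ t : Finset (Fin (d+1) → ℝ), ↑t ⊆ M → (t.card : ℝ) ≤ (1 + 4 / ε) ^ d := by
    intro t ht
    exact simplex_sep_card hε hd t (fun p hp => hMΔ (ht hp))
      (fun p hp q hq hne => hMsep (ht hp) (ht hq) hne)
  have hfin : M.Finite := by
    by_contra hinf
    obtain ⟨t, htsub, htcard⟩ :=
      Set.Infinite.exists_subset_card_eq hinf (⌈(1 + 4 / ε) ^ d⌉₊ + 1)
    have h1 := hbound t htsub
    have h2 := Nat.le_ceil ((1 + 4 / ε) ^ d)
    rw [htcard] at h1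
    push_cast at h1
    linarith
  refine ⟨hfin.toFinset, ?_, ?_, ?_⟩
  · exact hbound _ (by simp)
  · intro p hp
    exact hMΔ (hfin.mem_toFinset.1 hp)
  · intro w hw
    by_cases hwM : w ∈ M
    · exact ⟨w, hfin.mem_toFinset.2 hwM, by simp [hε.le]⟩
    · by_contra hno
      push_neg at hno
      have hall : ∀ p ∈ M, ε ≤ ∑ j, |w j - p j| := fun p hp =>
        (hno p (hfin.mem_toFinset.2 hp)).le
      have hins : insert w M ∈ Sep := by
        constructor
        · exact Set.insert_subset hw hMΔ
        · haveI : Std.Symm (fun p q : Fin (d+1) → ℝ => ε ≤ ∑ j, |p j - q j|) := ⟨fun a b hab => hsymm hab⟩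
          rw [Set.pairwise_insert_of_symm]
          exact ⟨hMsep, fun p hp _ => hall p hp⟩
      have hsub := hM.2 hins (Set.subset_insert _ _)
      exact hwM (hsub (Set.mem_insert _ _))
/-- Covering-number bound for a function class indexed by the probability simplex: if
`w ↦ h(w)` is `ρ₁`-Lipschitz from `(Δ_J, ‖·‖₁)` into the empirical `L₂` norm, then for
every `0 < u ≤ ρ₁` the class `{h(w) : w ∈ Δ_J}` admits a `u`-net of cardinality at most
`(1 + 4ρ₁/u)^{J−1}`. -/
theorem simplex_indexed_class_covering_number
    {α : Type*} (n : ℕ) (hn : 1 ≤ n) (x : Fin n → α)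
    (J : ℕ) (hJ : 1 ≤ J) (ρ₁ : ℝ) (hρ₁ : 0 < ρ₁)
    (h : (Fin J → ℝ) → α → ℝ)
    (hLip : ∀ w w' : Fin J → ℝ,
      ((∀ j, 0 ≤ w j) ∧ ∑ j, w j = 1) → ((∀ j, 0 ≤ w' j) ∧ ∑ j, w' j = 1) →
        Real.sqrt ((n : ℝ)⁻¹ * ∑ i, (h w (x i) - h w' (x i)) ^ 2)
          ≤ ρ₁ * ∑ j, |w j - w' j|)
    (u : ℝ) (hu : u ∈ Set.Ioc (0 : ℝ) ρ₁) :
    ∃ T : Finset (α → ℝ),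
      (T.card : ℝ) ≤ (1 + 4 * ρ₁ / u) ^ (J - 1)
      ∧ ∀ w : Fin J → ℝ, ((∀ j, 0 ≤ w j) ∧ ∑ j, w j = 1) →
          ∃ t ∈ T, Real.sqrt ((n : ℝ)⁻¹ * ∑ i, (h w (x i) - t (x i)) ^ 2) ≤ u := by
  classical
  obtain ⟨hu0, huρ⟩ := hu
  obtain ⟨d, rfl⟩ : ∃ d, J = d + 1 := ⟨J - 1, by omega⟩
  have hεpos : 0 < u / ρ₁ := div_pos hu0 hρ₁
  have hone : (0:ℝ) < 1 + 4 * ρ₁ / u := by positivity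
  rcases Nat.eq_zero_or_pos d with rfl | hd
  · -- J = 1
    refine ⟨{h (fun _ => 1)}, ?_, ?_⟩
    · simp
    · intro w hw
      refine ⟨_, Finset.mem_singleton_self _, ?_⟩
      have hw1 : w = fun _ => (1:ℝ) := by
        funext j
        have := hw.2
        rw [Fin.sum_univ_one] at this
        rw [Fin.fin_one_eq_zero j]
        exact this
      rw [hw1]
      simp [hu0.le]
  · obtain ⟨P, hPcard, hPΔ, hPnet⟩ := simplex_net hεpos hd
    refine ⟨P.image (fun p => h p), ?_, ?_⟩
    · calc ((P.image (fun p => h p)).card : ℝ) ≤ (P.card : ℝ) := by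
            exact_mod_cast Finset.card_image_le
      _ ≤ (1 + 4 / (u / ρ₁)) ^ d := hPcard
      _ = (1 + 4 * ρ₁ / u) ^ (d + 1 - 1) := by
            rw [div_div_eq_mul_div]; simp
    · intro w hw
      obtain ⟨p, hp, hdist⟩ := hPnet w hw
      refine ⟨h p, Finset.mem_image_of_mem _ hp, ?_⟩
      calc Real.sqrt ((n : ℝ)⁻¹ * ∑ i, (h w (x i) - h p (x i)) ^ 2)
          ≤ ρ₁ * ∑ j, |w j - p j| := hLip w p hw (hPΔ p hp)
      _ ≤ ρ₁ * (u / ρ₁) := by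
          apply mul_le_mul_of_nonneg_left hdist hρ₁.le
      _ = u := by field_simp
end

section
/- (Uniform law over the simplex, Lemma 2.) Let J ≥ 1 be an integer, ρ₁ > 0, let (E, ℰ) be a measurable space, and let h : E × Δ_J → ℝ be such that for each w ∈ Δ_J the map e ↦ h(e, w) is measurable, |h(e, w)| ≤ ρ₁ for all (e, w), and |h(e, w₁) − h(e, w₂)| ≤ ρ₁·‖w₁ − w₂‖₁ for all e ∈ E and w₁, w₂ ∈ Δ_J. Let ξ₁, ξ₂, … be i.i.d. E-valued random variables on a probability space with common law P. Then for every ε > 0 there exists C > 0 such that for all n ≥ 1, P( sup_{w ∈ Δ_J} | n⁻¹ Σ_{i=1}^n h(ξ_i, w) − E[h(ξ₁, w)] | ≥ C·n^{−1/2}·J^{1/2} ) ≤ ε; that is, the supremum over the simplex of the centered empirical average is O_p(n^{−1/2} J^{1/2}). -/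
open MeasureTheory ProbabilityTheory Finset Real ENNReal

set_option maxHeartbeats 1000000

open MeasureTheory ProbabilityTheory Finset

noncomputable section UnifLawAux

open Classical in
/-- Grid points with coordinates multiples of `1/m`, intersected with the simplex. -/
def simplexNet (J m : ℕ) : Finset (Fin J → ℝ) :=
  (Finset.image (fun a : Fin J → Fin (m+1) => fun j => (a j : ℝ) / m) Finset.univ).filter
    (fun w => (∀ j, 0 ≤ w j) ∧ ∑ j, w j = 1)

lemma simplexNet_card (J m : ℕ) : (simplexNet J m).card ≤ (m+1)^J := by
  classical
  refine le_trans (Finset.card_filter_le _ _) ?_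
  refine le_trans (Finset.card_image_le) ?_
  simp [Finset.card_univ]

lemma simplexNet_mem {J m : ℕ} {u : Fin J → ℝ} (hu : u ∈ simplexNet J m) :
    (∀ j, 0 ≤ u j) ∧ ∑ j, u j = 1 := by
  classical
  exact (Finset.mem_filter.mp hu).2

lemma simplexNet_approx {J m : ℕ} (hJ : 1 ≤ J) (hm : 1 ≤ m) {w : Fin J → ℝ}
    (hw : (∀ j, 0 ≤ w j) ∧ ∑ j, w j = 1) :
    ∃ u ∈ simplexNet J m, ∑ j, |w j - u j| ≤ 2 * J / m := by
  classical
  have hm0 : (0:ℝ) < m := by exact_mod_cast hm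
  set z : Fin J := ⟨0, hJ⟩ with hz
  set s : Finset (Fin J) := Finset.univ.erase z with hs
  -- each coordinate is at most 1
  have hw1 : ∀ j, w j ≤ 1 := by
    intro j
    calc w j ≤ ∑ j', w j' := Finset.single_le_sum (fun i _ => hw.1 i) (Finset.mem_univ j)
    _ = 1 := hw.2
  have hfl_le : ∀ j, (⌊m * w j⌋₊ : ℝ) ≤ m * w j := fun j =>
    Nat.floor_le (mul_nonneg hm0.le (hw.1 j))
  have hfl_gt : ∀ j, m * w j < ⌊m * w j⌋₊ + 1 := fun j => Nat.lt_floor_add_one _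
  -- sum of floors over s is at most m
  have hS : ∑ j ∈ s, ⌊m * w j⌋₊ ≤ m := by
    have : ((∑ j ∈ s, ⌊m * w j⌋₊ : ℕ) : ℝ) ≤ m := by
      push_cast
      calc ∑ j ∈ s, (⌊m * w j⌋₊ : ℝ) ≤ ∑ j ∈ s, m * w j :=
            Finset.sum_le_sum (fun j _ => hfl_le j)
      _ = m * ∑ j ∈ s, w j := by rw [Finset.mul_sum]
      _ ≤ m * ∑ j, w j := by
            refine mul_le_mul_of_nonneg_left ?_ hm0.le
            exact Finset.sum_le_sum_of_subset_of_nonneg (Finset.subset_univ _)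
              (fun i _ _ => hw.1 i)
      _ = m := by rw [hw.2, mul_one]
    exact_mod_cast this
  set a : Fin J → ℕ := fun j => if j = z then m - ∑ j' ∈ s, ⌊m * w j'⌋₊ else ⌊m * w j⌋₊
    with ha
  have haj : ∀ j, a j ≤ m := by
    intro j
    by_cases hj : j = z
    · simp [ha, hj]
    · simp only [ha, hj, if_false]
      have : (⌊m * w j⌋₊ : ℝ) ≤ m := le_trans (hfl_le j)
        (by nlinarith [hw1 j, hw.1 j])
      exact_mod_cast this
  set u : Fin J → ℝ := fun j => (a j : ℝ) / m with hu
  have haz : (a z : ℝ) = m - ∑ j ∈ s, (⌊m * w j⌋₊ : ℝ) := by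
    simp only [ha, if_pos rfl]
    push_cast [Nat.cast_sub hS]
    ring
  have hus : ∀ j ∈ s, u j = (⌊m * w j⌋₊ : ℝ) / m := by
    intro j hj
    have : j ≠ z := (Finset.mem_erase.mp hj).1
    simp [hu, ha, this]
  -- u is in the simplex
  have hu_nonneg : ∀ j, 0 ≤ u j := fun j => div_nonneg (Nat.cast_nonneg _) hm0.le
  have husum : ∑ j, u j = 1 := by
    rw [← Finset.add_sum_erase _ _ (Finset.mem_univ z), ← hs]
    have : ∑ j ∈ s, u j = (∑ j ∈ s, (⌊m * w j⌋₊ : ℝ)) / m := by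
      rw [Finset.sum_congr rfl hus, Finset.sum_div]
    rw [this, hu]
    simp only
    rw [haz]
    field_simp
    ring
  have hu_mem : u ∈ simplexNet J m := by
    refine Finset.mem_filter.mpr ⟨?_, hu_nonneg, husum⟩
    refine Finset.mem_image.mpr ⟨fun j => ⟨a j, Nat.lt_succ_of_le (haj j)⟩, Finset.mem_univ _, ?_⟩
    funext j; simp [hu]
  refine ⟨u, hu_mem, ?_⟩
  -- distance bound
  have hdiff : ∀ j ∈ s, 0 ≤ w j - u j ∧ w j - u j ≤ 1 / m := by
    intro j hj
    rw [hus j hj]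
    constructor
    · have := hfl_le j
      rw [sub_nonneg, div_le_iff₀ hm0]
      linarith
    · have := hfl_gt j
      rw [sub_le_iff_le_add, ← add_div, le_div_iff₀ hm0]
      linarith
  have hsum_s : ∑ j ∈ s, |w j - u j| ≤ J / m := by
    calc ∑ j ∈ s, |w j - u j| ≤ ∑ j ∈ s, (1:ℝ) / m := by
          refine Finset.sum_le_sum (fun j hj => ?_)
          rw [abs_of_nonneg (hdiff j hj).1]; exact (hdiff j hj).2
    _ = s.card * ((1:ℝ)/m) := by rw [Finset.sum_const, nsmul_eq_mul]
    _ ≤ J * ((1:ℝ)/m) := by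
          refine mul_le_mul_of_nonneg_right ?_ (by positivity)
          have := Finset.card_erase_le (a := z) (s := (Finset.univ : Finset (Fin J)))
          simp only [Finset.card_univ, Fintype.card_fin] at this
          exact_mod_cast le_trans this (le_refl J)
    _ = J / m := by ring
  have hz_bound : |w z - u z| ≤ J / m := by
    have h1 : u z - w z = ∑ j ∈ s, (w j - u j) := by
      have e1 : w z = 1 - ∑ j ∈ s, w j := by
        have := Finset.add_sum_erase (Finset.univ : Finset (Fin J)) w (Finset.mem_univ z)
        rw [← hs] at this; rw [hw.2] at this; linarith
      have e2 : u z = 1 - ∑ j ∈ s, u j := by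
        have := Finset.add_sum_erase (Finset.univ : Finset (Fin J)) u (Finset.mem_univ z)
        rw [← hs] at this; rw [husum] at this; linarith
      rw [e1, e2, Finset.sum_sub_distrib]; ring
    have h2 : 0 ≤ u z - w z := by
      rw [h1]; exact Finset.sum_nonneg (fun j hj => (hdiff j hj).1)
    have h3 : u z - w z ≤ J / m := by
      rw [h1]
      calc ∑ j ∈ s, (w j - u j) ≤ ∑ j ∈ s, |w j - u j| :=
            Finset.sum_le_sum (fun j _ => le_abs_self _)
      _ ≤ J / m := hsum_s
    rw [abs_sub_comm, abs_of_nonneg h2]; exact h3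
  calc ∑ j, |w j - u j| = |w z - u z| + ∑ j ∈ s, |w j - u j| := by
        rw [← Finset.add_sum_erase _ _ (Finset.mem_univ z), hs]
  _ ≤ J / m + J / m := add_le_add hz_bound hsum_s
  _ = 2 * J / m := by ring

end UnifLawAux
noncomputable section UnifLawAux2

variable {α : Type*} [MeasurableSpace α]

lemma integrable_of_abs_le {ν : Measure α} [IsFiniteMeasure ν] {f : α → ℝ} {c : ℝ}
    (hf : Measurable f) (hc : ∀ x, |f x| ≤ c) : Integrable f ν :=
  (integrable_const c).mono' hf.aestronglyMeasurable
    (ae_of_all _ (fun x => by simpa [Real.norm_eq_abs] using hc x))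

/-- Hoeffding's lemma (mgf bound) for a mean-zero bounded random variable. -/
lemma mgf_le_of_bounded {P : Measure α} [IsProbabilityMeasure P] {g : α → ℝ} {b t : ℝ}
    (hg : Measurable g) (hb : 0 < b) (hgb : ∀ e, |g e| ≤ b) (h0 : ∫ e, g e ∂P = 0) :
    ∫ e, Real.exp (t * g e) ∂P ≤ Real.exp (t^2 * b^2 / 2) := by
  have hint_g : Integrable g P := integrable_of_abs_le hg hgb
  -- pointwise convexity bound
  have hpt : ∀ e, Real.exp (t * g e) ≤
      (Real.exp (-(t*b)) + Real.exp (t*b)) / 2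
        + ((Real.exp (t*b) - Real.exp (-(t*b))) / (2*b)) * g e := by
    intro e
    have hx := hgb e
    have h1 : 0 ≤ (b - g e) / (2*b) := by
      have := abs_le.mp hx; apply div_nonneg <;> nlinarith
    have h2 : 0 ≤ (b + g e) / (2*b) := by
      have := abs_le.mp hx; apply div_nonneg <;> nlinarith
    have h3 : (b - g e) / (2*b) + (b + g e) / (2*b) = 1 := by field_simp; ring
    have hcx := convexOn_exp.2 (Set.mem_univ (-(t*b))) (Set.mem_univ (t*b)) h1 h2 h3
    simp only [smul_eq_mul] at hcx
    have harg : (b - g e) / (2*b) * (-(t*b)) + (b + g e) / (2*b) * (t*b) = t * g e := by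
      rw [div_mul_eq_mul_div, div_mul_eq_mul_div, ← add_div, eq_comm,
        eq_div_iff (by positivity : (2*b) ≠ 0)]
      ring
    rw [harg] at hcx
    calc Real.exp (t * g e) ≤ (b - g e)/(2*b) * Real.exp (-(t*b))
          + (b + g e)/(2*b) * Real.exp (t*b) := hcx
    _ = (Real.exp (-(t*b)) + Real.exp (t*b)) / 2
        + ((Real.exp (t*b) - Real.exp (-(t*b))) / (2*b)) * g e := by
        rw [div_mul_eq_mul_div, div_mul_eq_mul_div, ← add_div, div_mul_eq_mul_div,
          div_add_div _ _ (two_ne_zero) (by positivity : (2*b) ≠ 0)]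
        rw [div_eq_div_iff (by positivity : (2*b:ℝ) ≠ 0) (by positivity : (2*(2*b):ℝ) ≠ 0)]
        ring
  have hint_lhs : Integrable (fun e => Real.exp (t * g e)) P := by
    refine integrable_of_abs_le ((hg.const_mul t).exp) (c := Real.exp (|t| * b)) (fun x => ?_)
    rw [abs_of_nonneg (Real.exp_nonneg _)]
    apply Real.exp_le_exp.mpr
    calc t * g x ≤ |t * g x| := le_abs_self _
    _ = |t| * |g x| := abs_mul _ _
    _ ≤ |t| * b := by apply mul_le_mul_of_nonneg_left (hgb x) (abs_nonneg t)
  have hint_rhs : Integrable (fun e => (Real.exp (-(t*b)) + Real.exp (t*b)) / 2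
        + ((Real.exp (t*b) - Real.exp (-(t*b))) / (2*b)) * g e) P :=
    (integrable_const _).add (hint_g.const_mul _)
  calc ∫ e, Real.exp (t * g e) ∂P
      ≤ ∫ e, ((Real.exp (-(t*b)) + Real.exp (t*b)) / 2
        + ((Real.exp (t*b) - Real.exp (-(t*b))) / (2*b)) * g e) ∂P :=
        integral_mono hint_lhs hint_rhs hpt
  _ = (Real.exp (-(t*b)) + Real.exp (t*b)) / 2 := by
        rw [integral_add (integrable_const _) (hint_g.const_mul _), integral_const,
          integral_const_mul, h0, mul_zero, add_zero]
        simp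
  _ = Real.cosh (t*b) := by rw [Real.cosh_eq]; ring_nf
  _ ≤ Real.exp ((t*b)^2/2) := Real.cosh_le_exp_half_sq _
  _ = Real.exp (t^2 * b^2 / 2) := by ring_nf

variable {Ω : Type*} [MeasurableSpace Ω] {μ : Measure Ω} [IsProbabilityMeasure μ]
  {P : Measure α} [IsProbabilityMeasure P]

/-- One-sided Chernoff bound for a sum of iid mean-zero bounded variables. -/
lemma chernoff_sum_ge {ξ : ℕ → Ω → α} (hξmeas : ∀ i, Measurable (ξ i))
    (hindep : iIndepFun ξ μ) (hlaw : ∀ i, μ.map (ξ i) = P)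
    {g : α → ℝ} (hg : Measurable g) {b : ℝ} (hb : 0 < b) (hgb : ∀ e, |g e| ≤ b)
    (h0 : ∫ e, g e ∂P = 0) {n : ℕ} (hn : 1 ≤ n) {a : ℝ} (ha : 0 ≤ a) :
    (μ {ω | a ≤ ∑ i ∈ Finset.range n, g (ξ i ω)}).toReal ≤
      Real.exp (-a^2 / (2 * n * b^2)) := by
  set X : ℕ → Ω → ℝ := fun i ω => g (ξ i ω) with hX
  have hXmeas : ∀ i, Measurable (X i) := fun i => hg.comp (hξmeas i)
  have hXindep : iIndepFun X μ :=
    hindep.comp (fun _ => g) (fun _ => hg)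
  set t : ℝ := a / (n * b^2) with ht
  have hn0 : (0:ℝ) < n := by exact_mod_cast hn
  have ht0 : 0 ≤ t := div_nonneg ha (by positivity)
  have hmgf_i : ∀ i, mgf (X i) μ t = ∫ e, Real.exp (t * g e) ∂P := by
    intro i
    rw [mgf, ← hlaw i, integral_map (hξmeas i).aemeasurable
      ((hg.const_mul t).exp).aestronglyMeasurable]
  have hbound_i : ∀ i, mgf (X i) μ t ≤ Real.exp (t^2 * b^2 / 2) := by
    intro i; rw [hmgf_i i]; exact mgf_le_of_bounded hg hb hgb h0
  have hsum_meas : Measurable (fun ω => ∑ i ∈ Finset.range n, X i ω) := by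
    exact Finset.measurable_sum _ (fun i _ => hXmeas i)
  have hSeq : (∑ i ∈ Finset.range n, X i) = fun ω => ∑ i ∈ Finset.range n, X i ω := by
    funext ω; simp [Finset.sum_apply]
  have hint : Integrable (fun ω => Real.exp (t * (∑ i ∈ Finset.range n, X i) ω)) μ := by
    rw [hSeq]
    refine integrable_of_abs_le ((hsum_meas.const_mul t).exp) (c := Real.exp (|t| * (n * b)))
      (fun ω => ?_)
    rw [abs_of_nonneg (Real.exp_nonneg _)]
    apply Real.exp_le_exp.mpr
    calc t * (∑ i ∈ Finset.range n, X i ω) ≤ |t * (∑ i ∈ Finset.range n, X i ω)| := le_abs_self _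
    _ = |t| * |∑ i ∈ Finset.range n, X i ω| := abs_mul _ _
    _ ≤ |t| * (n * b) := by
        refine mul_le_mul_of_nonneg_left ?_ (abs_nonneg t)
        calc |∑ i ∈ Finset.range n, X i ω| ≤ ∑ i ∈ Finset.range n, |X i ω| :=
              Finset.abs_sum_le_sum_abs _ _
        _ ≤ ∑ i ∈ Finset.range n, b := Finset.sum_le_sum (fun i _ => hgb _)
        _ = n * b := by rw [Finset.sum_const, Finset.card_range, nsmul_eq_mul]
  have key := measure_ge_le_exp_mul_mgf (μ := μ) (X := ∑ i ∈ Finset.range n, X i) a ht0 hint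
  have hmgf_sum : mgf (∑ i ∈ Finset.range n, X i) μ t ≤ Real.exp (n * (t^2 * b^2 / 2)) := by
    rw [hXindep.mgf_sum hXmeas]
    calc ∏ i ∈ Finset.range n, mgf (X i) μ t
        ≤ ∏ i ∈ Finset.range n, Real.exp (t^2 * b^2 / 2) :=
          Finset.prod_le_prod (fun i _ => mgf_nonneg) (fun i _ => hbound_i i)
    _ = Real.exp (n * (t^2 * b^2 / 2)) := by
        rw [Finset.prod_const, Finset.card_range, ← Real.exp_nat_mul]
  have hset : {ω | a ≤ ∑ i ∈ Finset.range n, g (ξ i ω)}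
      = {ω | a ≤ (∑ i ∈ Finset.range n, X i) ω} := by
    ext ω; simp [hX, Finset.sum_apply]
  rw [hset]
  refine le_trans key ?_
  calc Real.exp (-t * a) * mgf (∑ i ∈ Finset.range n, X i) μ t
      ≤ Real.exp (-t * a) * Real.exp (n * (t^2 * b^2 / 2)) := by
        exact mul_le_mul_of_nonneg_left hmgf_sum (Real.exp_nonneg _)
  _ = Real.exp (-t * a + n * (t^2 * b^2 / 2)) := by rw [← Real.exp_add]
  _ = Real.exp (-a^2 / (2 * n * b^2)) := by
        congr 1
        rw [ht]
        field_simp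
        ring

/-- Two-sided Chernoff bound for the empirical average. -/
lemma chernoff_avg_abs {ξ : ℕ → Ω → α} (hξmeas : ∀ i, Measurable (ξ i))
    (hindep : iIndepFun ξ μ) (hlaw : ∀ i, μ.map (ξ i) = P)
    {g : α → ℝ} (hg : Measurable g) {b : ℝ} (hb : 0 < b) (hgb : ∀ e, |g e| ≤ b)
    (h0 : ∫ e, g e ∂P = 0) {n : ℕ} (hn : 1 ≤ n) {a : ℝ} (ha : 0 ≤ a) :
    μ {ω | a ≤ |(n:ℝ)⁻¹ * ∑ i ∈ Finset.range n, g (ξ i ω)|} ≤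
      ENNReal.ofReal (2 * Real.exp (-(n * a^2) / (2 * b^2))) := by
  have hn0 : (0:ℝ) < n := by exact_mod_cast hn
  have hsub : {ω | a ≤ |(n:ℝ)⁻¹ * ∑ i ∈ Finset.range n, g (ξ i ω)|} ⊆
      {ω | (n*a : ℝ) ≤ ∑ i ∈ Finset.range n, g (ξ i ω)} ∪
      {ω | (n*a : ℝ) ≤ ∑ i ∈ Finset.range n, (fun e => -g e) (ξ i ω)} := by
    intro ω hω
    simp only [Set.mem_setOf_eq] at hω
    rw [abs_mul, abs_of_nonneg (inv_nonneg.mpr hn0.le)] at hω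
    have : n * a ≤ |∑ i ∈ Finset.range n, g (ξ i ω)| := by
      calc (n:ℝ) * a ≤ n * ((n:ℝ)⁻¹ * |∑ i ∈ Finset.range n, g (ξ i ω)|) :=
            mul_le_mul_of_nonneg_left hω hn0.le
      _ = |∑ i ∈ Finset.range n, g (ξ i ω)| := by field_simp
    rcases abs_le.mp (le_refl |∑ i ∈ Finset.range n, g (ξ i ω)|) with ⟨h1, h2⟩
    rcases le_or_gt (n*a) (∑ i ∈ Finset.range n, g (ξ i ω)) with hc | hc
    · exact Or.inl hc
    · refine Or.inr ?_
      simp only [Set.mem_setOf_eq, ← Finset.sum_neg_distrib]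
      rcases abs_cases (∑ i ∈ Finset.range n, g (ξ i ω)) with ⟨he, _⟩ | ⟨he, _⟩
      · rw [he] at this; linarith
      · rw [he] at this; simpa [Finset.sum_neg_distrib] using this
  have hpos := chernoff_sum_ge hξmeas hindep hlaw hg hb hgb h0 hn (a := n*a)
    (by positivity)
  have hneg : (μ {ω | (n*a:ℝ) ≤ ∑ i ∈ Finset.range n, (fun e => -g e) (ξ i ω)}).toReal ≤
      Real.exp (-(n*a)^2 / (2 * n * b^2)) := by
    refine chernoff_sum_ge hξmeas hindep hlaw hg.neg hb (fun e => by simpa using hgb e) ?_ hn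
      (by positivity)
    simp only [Pi.neg_apply]
    rw [integral_neg, h0, neg_zero]
  have hexp_eq : -((n:ℝ)*a)^2 / (2 * n * b^2) = -(n * a^2) / (2 * b^2) := by
    field_simp
  calc μ _ ≤ μ ({ω | (n*a : ℝ) ≤ ∑ i ∈ Finset.range n, g (ξ i ω)}) +
      μ ({ω | (n*a : ℝ) ≤ ∑ i ∈ Finset.range n, (fun e => -g e) (ξ i ω)}) :=
        le_trans (measure_mono hsub) (measure_union_le _ _)
  _ ≤ ENNReal.ofReal (Real.exp (-(n * a^2) / (2 * b^2))) +
      ENNReal.ofReal (Real.exp (-(n * a^2) / (2 * b^2))) := by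
      gcongr
      · rw [← hexp_eq]
        exact le_trans (ENNReal.ofReal_toReal (measure_ne_top μ _)).symm.le
          (ENNReal.ofReal_le_ofReal hpos)
      · rw [← hexp_eq]
        exact le_trans (ENNReal.ofReal_toReal (measure_ne_top μ _)).symm.le
          (ENNReal.ofReal_le_ofReal hneg)
  _ = ENNReal.ofReal (2 * Real.exp (-(n * a^2) / (2 * b^2))) := by
      rw [← ENNReal.ofReal_add (Real.exp_nonneg _) (Real.exp_nonneg _)]
      congr 1; ring

end UnifLawAux2

lemma geom_aux {r : ℝ} (hr0 : 0 ≤ r) (hr1 : r ≤ 3/4) (K : ℕ) :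
    ∑ k ∈ Finset.range K, r ^ k ≤ 4 := by
  calc ∑ k ∈ Finset.range K, r ^ k ≤ ∑ k ∈ Finset.range K, (3/4:ℝ) ^ k :=
        Finset.sum_le_sum (fun k _ => pow_le_pow_left₀ hr0 hr1 k)
  _ ≤ 4 := by
      rw [geom_sum_eq (by norm_num : (3/4:ℝ) ≠ 1)]
      rw [div_le_iff_of_neg (by norm_num : (3/4:ℝ) - 1 < 0)]
      have h1 : (0:ℝ) ≤ (3/4:ℝ)^K := by positivity
      linarith

lemma inv_sqrt_two_le : (Real.sqrt 2)⁻¹ ≤ 3/4 := by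
  have h43 : (4/3:ℝ) ≤ Real.sqrt 2 := by
    rw [show (4/3:ℝ) = Real.sqrt ((4/3)^2) by rw [Real.sqrt_sq (by norm_num)]]
    apply Real.sqrt_le_sqrt; norm_num
  calc (Real.sqrt 2)⁻¹ ≤ (4/3:ℝ)⁻¹ := by
        apply inv_anti₀ (by norm_num) h43
  _ ≤ 3/4 := by norm_num

lemma succ_le_two_pow (k : ℕ) : (k + 1 : ℝ) ≤ 2 ^ k := by
  have := Nat.lt_two_pow_self (n := k)
  exact_mod_cast Nat.succ_le_of_lt this

lemma two_pow_le_exp (m : ℕ) : (2:ℝ) ^ m ≤ Real.exp m := by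
  calc (2:ℝ)^m ≤ (Real.exp 1)^m := by
        apply pow_le_pow_left₀ (by norm_num)
        have := Real.add_one_le_exp (1:ℝ); linarith
  _ = Real.exp m := by rw [← Real.exp_nat_mul]; ring_nf

lemma exp_neg_le_half_pow (k : ℕ) : Real.exp (-(k+1:ℝ)) ≤ (2⁻¹:ℝ) ^ (k+1) := by
  rw [Real.exp_neg, show ((2:ℝ)⁻¹)^(k+1) = ((2:ℝ)^(k+1))⁻¹ by rw [inv_pow]]
  apply inv_anti₀ (by positivity)
  have := two_pow_le_exp (k+1)
  simpa using this

lemma measure_biUnion_card_le {Ω β : Type*} [MeasurableSpace Ω] (μ : Measure Ω)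
    {s : Finset β} {A : β → Set Ω} {t : ℝ} {N : ℕ}
    (hcard : s.card ≤ N) (hA : ∀ u ∈ s, μ (A u) ≤ ENNReal.ofReal t) :
    μ (⋃ u ∈ s, A u) ≤ ENNReal.ofReal ((N : ℝ) * t) := by
  calc μ (⋃ u ∈ s, A u) ≤ ∑ u ∈ s, μ (A u) := measure_biUnion_finset_le s A
  _ ≤ ∑ _u ∈ s, ENNReal.ofReal t := Finset.sum_le_sum hA
  _ = (s.card : ℝ≥0∞) * ENNReal.ofReal t := by rw [Finset.sum_const]; simp [nsmul_eq_mul]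
  _ ≤ (N : ℝ≥0∞) * ENNReal.ofReal t := mul_le_mul_left (by exact_mod_cast hcard) _
  _ = ENNReal.ofReal ((N : ℝ) * t) := by
      rw [ENNReal.ofReal_mul (by positivity : (0:ℝ) ≤ (N:ℝ)), ENNReal.ofReal_natCast]


/-- Uniform law over the simplex (Lemma 2): if `h : E × Δ_J → ℝ` is measurable in its
first argument, uniformly bounded by `ρ₁`, and `ρ₁`-Lipschitz in `w ∈ Δ_J` for the `ℓ¹`
distance, and `ξ₁, ξ₂, …` are i.i.d. with common law `P`, then for every `ε > 0` there is
`C > 0` such that for all `n ≥ 1`,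
`P(sup_{w ∈ Δ_J} |n⁻¹ Σ_{i<n} h(ξ_i, w) − E[h(ξ₁, w)]| ≥ C n^{−1/2} J^{1/2}) ≤ ε`. -/
theorem uniform_law_over_simplex
    {E : Type*} [MeasurableSpace E] (J : ℕ) (hJ : 1 ≤ J) (ρ₁ : ℝ) (hρ₁ : 0 < ρ₁)
    (h : E → (Fin J → ℝ) → ℝ)
    (hmeas : ∀ w : Fin J → ℝ, ((∀ j, 0 ≤ w j) ∧ ∑ j, w j = 1) →
      Measurable (fun e => h e w))
    (hbdd : ∀ (e : E) (w : Fin J → ℝ), ((∀ j, 0 ≤ w j) ∧ ∑ j, w j = 1) → |h e w| ≤ ρ₁)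
    (hLip : ∀ (e : E) (w₁ w₂ : Fin J → ℝ),
      ((∀ j, 0 ≤ w₁ j) ∧ ∑ j, w₁ j = 1) → ((∀ j, 0 ≤ w₂ j) ∧ ∑ j, w₂ j = 1) →
      |h e w₁ - h e w₂| ≤ ρ₁ * ∑ j, |w₁ j - w₂ j|)
    {Ω : Type*} [MeasurableSpace Ω] (μ : Measure Ω) [IsProbabilityMeasure μ]
    (P : Measure E) [IsProbabilityMeasure P]
    (ξ : ℕ → Ω → E) (hξmeas : ∀ i, Measurable (ξ i))
    (hindep : iIndepFun ξ μ)
    (hlaw : ∀ i, μ.map (ξ i) = P) :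
    ∀ ε : ℝ, 0 < ε → ∃ C : ℝ, 0 < C ∧ ∀ n : ℕ, 1 ≤ n →
      μ {ω | C / Real.sqrt n * Real.sqrt J ≤
          ⨆ w ∈ {w : Fin J → ℝ | (∀ j, 0 ≤ w j) ∧ ∑ j, w j = 1},
            |(n : ℝ)⁻¹ * ∑ i ∈ Finset.range n, h (ξ i ω) w - ∫ e, h e w ∂P|}
        ≤ ENNReal.ofReal ε := by
  classical
  intro ε hε
  have hJ1 : (1:ℝ) ≤ (J:ℝ) := by exact_mod_cast hJ
  set L1 : ℝ := max (Real.log (8/ε)) 0 with hL1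
  set L2 : ℝ := max (Real.log (4/ε)) 0 with hL2
  have hL1_0 : 0 ≤ L1 := le_max_right _ _
  have hL2_0 : 0 ≤ L2 := le_max_right _ _
  have hL1_log : Real.log (8/ε) ≤ L1 := le_max_left _ _
  have hL2_log : Real.log (4/ε) ≤ L2 := le_max_left _ _
  set c : ℝ := 3*(J:ℝ) + 1 + L1 with hc
  have hc0 : 0 < c := by positivity
  set M : ℝ := Real.sqrt (72 * (J:ℝ)^2 * c) with hM
  set Mb : ℝ := Real.sqrt (8 * ((J:ℝ) + 1 + L2)) with hMb
  have hM0 : 0 ≤ M := Real.sqrt_nonneg _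
  have hMb0 : 0 ≤ Mb := Real.sqrt_nonneg _
  have hM2 : M^2 = 72 * (J:ℝ)^2 * c := Real.sq_sqrt (by positivity)
  have hMb2 : Mb^2 = 8 * ((J:ℝ) + 1 + L2) := Real.sq_sqrt (by positivity)
  set B : ℝ := ρ₁ * (Mb + 4*M + 4*(J:ℝ)) with hB
  have hB0 : 0 ≤ B := by positivity
  refine ⟨B + 1, by positivity, ?_⟩
  intro n hn
  have hn0 : (0:ℝ) < n := by exact_mod_cast hn
  set rn : ℝ := Real.sqrt n with hrn
  have hrn0 : 0 < rn := Real.sqrt_pos.mpr hn0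
  have hrn2 : rn^2 = n := Real.sq_sqrt hn0.le
  have hrn1 : 1 ≤ rn := by
    rw [hrn, show (1:ℝ) = Real.sqrt 1 by simp]
    exact Real.sqrt_le_sqrt (by exact_mod_cast hn)
  have hrn_le : rn ≤ n := by nlinarith
  -- mean and the centered empirical process
  set mh : (Fin J → ℝ) → ℝ := fun w => ∫ e, h e w ∂P with hmh
  set F : (Fin J → ℝ) → Ω → ℝ :=
    fun w ω => (n:ℝ)⁻¹ * ∑ i ∈ Finset.range n, h (ξ i ω) w - mh w with hF
  have hint : ∀ w, ((∀ j, 0 ≤ w j) ∧ ∑ j, w j = 1) → Integrable (fun e => h e w) P :=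
    fun w hw => integrable_of_abs_le (hmeas w hw) (fun e => hbdd e w hw)
  have hmh_abs : ∀ w, ((∀ j, 0 ≤ w j) ∧ ∑ j, w j = 1) → |mh w| ≤ ρ₁ := by
    intro w hw
    have := norm_integral_le_of_norm_le_const (μ := P) (f := fun e => h e w) (C := ρ₁)
      (Filter.Eventually.of_forall (fun e => by simpa [Real.norm_eq_abs] using hbdd e w hw))
    simpa [hmh, Real.norm_eq_abs, measure_univ] using this
  have hmh_lip : ∀ u v, ((∀ j, 0 ≤ u j) ∧ ∑ j, u j = 1) → ((∀ j, 0 ≤ v j) ∧ ∑ j, v j = 1) →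
      |mh u - mh v| ≤ ρ₁ * ∑ j, |u j - v j| := by
    intro u v hu hv
    have heq : mh u - mh v = ∫ e, (h e u - h e v) ∂P := by
      rw [hmh]; exact (integral_sub (hint u hu) (hint v hv)).symm
    rw [heq]
    have := norm_integral_le_of_norm_le_const (μ := P) (f := fun e => h e u - h e v)
      (C := ρ₁ * ∑ j, |u j - v j|)
      (Filter.Eventually.of_forall (fun e => by simpa [Real.norm_eq_abs] using hLip e u v hu hv))
    simpa [Real.norm_eq_abs, measure_univ] using this
  -- algebraic identities for F
  have hFpt : ∀ u ω, F u ω = (n:ℝ)⁻¹ * ∑ i ∈ Finset.range n, (h (ξ i ω) u - mh u) := by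
    intro u ω
    rw [hF]
    simp only
    rw [Finset.sum_sub_distrib, Finset.sum_const, Finset.card_range, nsmul_eq_mul, mul_sub]
    congr 1
    field_simp
  have hFdiff : ∀ u v ω, F u ω - F v ω
      = (n:ℝ)⁻¹ * ∑ i ∈ Finset.range n, ((h (ξ i ω) u - h (ξ i ω) v) - (mh u - mh v)) := by
    intro u v ω
    rw [hFpt, hFpt, ← mul_sub, ← Finset.sum_sub_distrib]
    congr 1
    apply Finset.sum_congr rfl
    intros; ring
  -- pathwise Lipschitz bound for F
  have hFlip : ∀ ω u v, ((∀ j, 0 ≤ u j) ∧ ∑ j, u j = 1) → ((∀ j, 0 ≤ v j) ∧ ∑ j, v j = 1) →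
      |F u ω - F v ω| ≤ 2*ρ₁ * ∑ j, |u j - v j| := by
    intro ω u v hu hv
    rw [hFdiff]
    rw [abs_mul, abs_of_nonneg (inv_nonneg.mpr hn0.le)]
    have hterm : ∀ i, |(h (ξ i ω) u - h (ξ i ω) v) - (mh u - mh v)|
        ≤ 2*ρ₁ * ∑ j, |u j - v j| := by
      intro i
      calc |(h (ξ i ω) u - h (ξ i ω) v) - (mh u - mh v)|
          ≤ |h (ξ i ω) u - h (ξ i ω) v| + |mh u - mh v| := abs_sub _ _
      _ ≤ ρ₁ * ∑ j, |u j - v j| + ρ₁ * ∑ j, |u j - v j| :=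
          add_le_add (hLip _ u v hu hv) (hmh_lip u v hu hv)
      _ = 2*ρ₁ * ∑ j, |u j - v j| := by ring
    calc (n:ℝ)⁻¹ * |∑ i ∈ Finset.range n, ((h (ξ i ω) u - h (ξ i ω) v) - (mh u - mh v))|
        ≤ (n:ℝ)⁻¹ * ∑ i ∈ Finset.range n, (2*ρ₁ * ∑ j, |u j - v j|) := by
          refine mul_le_mul_of_nonneg_left ?_ (inv_nonneg.mpr hn0.le)
          exact le_trans (Finset.abs_sum_le_sum_abs _ _)
            (Finset.sum_le_sum (fun i _ => hterm i))
    _ = 2*ρ₁ * ∑ j, |u j - v j| := by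
          rw [Finset.sum_const, Finset.card_range, nsmul_eq_mul]
          field_simp
  -- thresholds
  set r : ℝ := (Real.sqrt 2)⁻¹ with hr
  have hr0 : 0 ≤ r := by positivity
  have hr2 : r^2 = 2⁻¹ := by
    rw [hr, inv_pow, Real.sq_sqrt (by norm_num : (0:ℝ) ≤ 2)]
  set sb : ℝ := ρ₁ * Mb / rn with hsb
  have hsb0 : 0 ≤ sb := by positivity
  set sk : ℕ → ℝ := fun k => ρ₁ * M * r^k / rn with hsk
  have hsk0 : ∀ k, 0 ≤ sk k := fun k => by rw [hsk]; positivity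
  -- bad events
  set pairs : ℕ → Finset ((Fin J → ℝ) × (Fin J → ℝ)) := fun k =>
    ((simplexNet J (2^k)) ×ˢ (simplexNet J (2^(k+1)))).filter
      (fun p => ∑ j, |p.1 j - p.2 j| ≤ 3*(J:ℝ)*((2:ℝ)⁻¹)^k) with hpairs
  set Bad : Set Ω := (⋃ u ∈ (simplexNet J 1 : Finset (Fin J → ℝ)), {ω | sb ≤ |F u ω|}) ∪
    ⋃ k ∈ Finset.range n, ⋃ p ∈ pairs k, {ω | sk k ≤ |F p.1 ω - F p.2 ω|} with hBaddef
  -- STEP 1: inclusion of the event into Bad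
  have hincl : {ω | (B+1) / rn * Real.sqrt J ≤
      ⨆ w ∈ {w : Fin J → ℝ | (∀ j, 0 ≤ w j) ∧ ∑ j, w j = 1},
        |(n : ℝ)⁻¹ * ∑ i ∈ Finset.range n, h (ξ i ω) w - ∫ e, h e w ∂P|} ⊆ Bad := by
    intro ω hω
    simp only [Set.mem_setOf_eq] at hω
    by_contra hbad
    rw [hBaddef] at hbad
    simp only [Set.mem_union, not_or, Set.mem_iUnion, not_exists, Set.mem_setOf_eq,
      not_le] at hbad
    obtain ⟨hgood0, hgoodk⟩ := hbad
    -- on the good event, the supremum is small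
    have key : ∀ w, ((∀ j, 0 ≤ w j) ∧ ∑ j, w j = 1) → |F w ω| ≤ B / rn := by
      intro w hw
      have hap : ∀ k : ℕ, ∃ u ∈ simplexNet J (2^k), ∑ j, |w j - u j| ≤ 2*(J:ℝ)/((2^k : ℕ):ℝ) :=
        fun k => simplexNet_approx hJ (Nat.two_pow_pos k) hw
      choose U hU hUd using hap
      have hUS : ∀ k, ((∀ j, 0 ≤ U k j) ∧ ∑ j, U k j = 1) := fun k => simplexNet_mem (hU k)
      have hUd' : ∀ k, ∑ j, |w j - U k j| ≤ 2*(J:ℝ)/(2:ℝ)^k := by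
        intro k
        have := hUd k
        rwa [Nat.cast_pow, Nat.cast_ofNat] at this
      -- telescoping
      have htel : F w ω = F (U 0) ω
          + (∑ k ∈ Finset.range n, (F (U (k+1)) ω - F (U k) ω)) + (F w ω - F (U n) ω) := by
        rw [Finset.sum_range_sub (fun k => F (U k) ω)]
        ring
      -- base term
      have hbase : |F (U 0) ω| < sb := by
        have : U 0 ∈ simplexNet J 1 := by
          have := hU 0
          norm_num at this
          exact this
        exact hgood0 _ this
      -- increments
      have hinc : ∀ k, k < n → |F (U (k+1)) ω - F (U k) ω| < sk k := by
        intro k hk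
        have hdist : ∑ j, |U k j - U (k+1) j| ≤ 3*(J:ℝ)*((2:ℝ)⁻¹)^k := by
          have htri : ∑ j, |U k j - U (k+1) j|
              ≤ (∑ j, |w j - U k j|) + (∑ j, |w j - U (k+1) j|) := by
            rw [← Finset.sum_add_distrib]
            refine Finset.sum_le_sum (fun j _ => ?_)
            calc |U k j - U (k+1) j| ≤ |U k j - w j| + |w j - U (k+1) j| := abs_sub_le _ _ _
            _ = |w j - U k j| + |w j - U (k+1) j| := by rw [abs_sub_comm]
          refine le_trans htri (le_trans (add_le_add (hUd' k) (hUd' (k+1))) (le_of_eq ?_))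
          have h2k : ((2:ℝ)^k) ≠ 0 := by positivity
          rw [inv_pow, pow_succ]
          field_simp
          ring
        have hmem : (U k, U (k+1)) ∈ pairs k := by
          rw [hpairs]
          refine Finset.mem_filter.mpr ⟨Finset.mem_product.mpr ⟨hU k, hU (k+1)⟩, hdist⟩
        rw [abs_sub_comm]
        exact hgoodk k (Finset.mem_range.mpr hk) (U k, U (k+1)) hmem
      -- tail
      have htail : |F w ω - F (U n) ω| ≤ 4*ρ₁*(J:ℝ)/rn := by
        calc |F w ω - F (U n) ω| ≤ 2*ρ₁ * ∑ j, |w j - U n j| := hFlip ω w (U n) hw (hUS n)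
        _ ≤ 2*ρ₁ * (2*(J:ℝ)/(2:ℝ)^n) := by
            exact mul_le_mul_of_nonneg_left (hUd' n) (by positivity)
        _ = 4*ρ₁*(J:ℝ)/(2:ℝ)^n := by ring
        _ ≤ 4*ρ₁*(J:ℝ)/(n:ℝ) := by
            apply div_le_div_of_nonneg_left (by positivity) hn0
            calc (n:ℝ) ≤ (n:ℝ) + 1 := by linarith
            _ ≤ 2^n := by
                have := succ_le_two_pow n
                exact_mod_cast this
        _ ≤ 4*ρ₁*(J:ℝ)/rn := by
            apply div_le_div_of_nonneg_left (by positivity) hrn0 hrn_le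
      -- sum of increments
      have hsum_inc : ∑ k ∈ Finset.range n, |F (U (k+1)) ω - F (U k) ω|
          ≤ 4 * (ρ₁ * M) / rn := by
        calc ∑ k ∈ Finset.range n, |F (U (k+1)) ω - F (U k) ω|
            ≤ ∑ k ∈ Finset.range n, sk k :=
              Finset.sum_le_sum (fun k hk => le_of_lt (hinc k (Finset.mem_range.mp hk)))
        _ = (ρ₁ * M) * (∑ k ∈ Finset.range n, r^k) / rn := by
            simp only [hsk]
            rw [← Finset.sum_div, ← Finset.mul_sum]
        _ ≤ (ρ₁ * M) * 4 / rn := by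
            gcongr
            exact geom_aux hr0 inv_sqrt_two_le n
        _ = 4 * (ρ₁ * M) / rn := by ring
      calc |F w ω| = |F (U 0) ω
          + (∑ k ∈ Finset.range n, (F (U (k+1)) ω - F (U k) ω)) + (F w ω - F (U n) ω)| :=
            congrArg abs htel
      _ ≤ (|F (U 0) ω + ∑ k ∈ Finset.range n, (F (U (k+1)) ω - F (U k) ω)|)
            + |F w ω - F (U n) ω| := abs_add_le _ _
      _ ≤ (|F (U 0) ω| + |∑ k ∈ Finset.range n, (F (U (k+1)) ω - F (U k) ω)|)
            + |F w ω - F (U n) ω| := add_le_add (abs_add_le _ _) le_rfl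
      _ ≤ |F (U 0) ω|
          + (∑ k ∈ Finset.range n, |F (U (k+1)) ω - F (U k) ω|) + |F w ω - F (U n) ω| := by
            refine add_le_add (add_le_add le_rfl ?_) le_rfl
            exact Finset.abs_sum_le_sum_abs _ _
      _ ≤ sb + 4 * (ρ₁ * M) / rn + 4*ρ₁*(J:ℝ)/rn :=
          add_le_add (add_le_add hbase.le hsum_inc) htail
      _ = B / rn := by rw [hsb, hB]; field_simp
    -- bound the supremum
    have hsup : (⨆ w : Fin J → ℝ, ⨆ (_ : (∀ j, 0 ≤ w j) ∧ ∑ j, w j = 1),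
        |(n : ℝ)⁻¹ * ∑ i ∈ Finset.range n, h (ξ i ω) w - ∫ e, h e w ∂P|) ≤ B / rn := by
      refine Real.iSup_le (fun w => ?_) (by positivity)
      refine Real.iSup_le (fun hw => ?_) (by positivity)
      have : (n : ℝ)⁻¹ * ∑ i ∈ Finset.range n, h (ξ i ω) w - ∫ e, h e w ∂P = F w ω := by
        rw [hF]
      rw [this]
      exact key w hw
    -- contradiction
    have h1 : (B+1)/rn ≤ (B+1)/rn * Real.sqrt J := by
      refine le_mul_of_one_le_right (by positivity) ?_
      rw [show (1:ℝ) = Real.sqrt 1 by simp]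
      exact Real.sqrt_le_sqrt hJ1
    have h2 : B/rn < (B+1)/rn := by
      have he : (B+1)/rn - B/rn = 1/rn := by
        rw [div_sub_div_same]; norm_num
      have : 0 < 1/rn := by positivity
      linarith
    linarith
  refine le_trans (measure_mono hincl) ?_
  -- STEP 2: probability bound for Bad
  have hBad0 : μ (⋃ u ∈ (simplexNet J 1 : Finset (Fin J → ℝ)), {ω | sb ≤ |F u ω|})
      ≤ ENNReal.ofReal (ε/2) := by
    have hone : ∀ u ∈ simplexNet J 1, μ {ω | sb ≤ |F u ω|}
        ≤ ENNReal.ofReal (2 * Real.exp (-((J:ℝ)+1+L2))) := by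
      intro u hu
      have huS := simplexNet_mem hu
      have hgmeas : Measurable (fun e => h e u - mh u) := (hmeas u huS).sub measurable_const
      have hgb : ∀ e, |h e u - mh u| ≤ 2*ρ₁ := by
        intro e
        calc |h e u - mh u| ≤ |h e u| + |mh u| := abs_sub _ _
        _ ≤ ρ₁ + ρ₁ := add_le_add (hbdd e u huS) (hmh_abs u huS)
        _ = 2*ρ₁ := by ring
      have hg0 : ∫ e, (h e u - mh u) ∂P = 0 := by
        rw [integral_sub (hint u huS) (integrable_const _), integral_const]
        simp [hmh]
      have hset : {ω | sb ≤ |F u ω|}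
          = {ω | sb ≤ |(n:ℝ)⁻¹ * ∑ i ∈ Finset.range n, (fun e => h e u - mh u) (ξ i ω)|} := by
        ext ω; simp only [Set.mem_setOf_eq, hFpt u ω]
      rw [hset]
      refine le_trans
        (chernoff_avg_abs hξmeas hindep hlaw hgmeas (by positivity) hgb hg0 hn hsb0)
        (ENNReal.ofReal_le_ofReal (le_of_eq ?_))
      have hexp : -((n:ℝ) * sb^2) / (2 * (2*ρ₁)^2) = -((J:ℝ)+1+L2) := by
        have e1 : (n:ℝ) * sb^2 = ρ₁^2 * Mb^2 := by
          rw [hsb]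
          calc (n:ℝ) * (ρ₁ * Mb / rn)^2 = (n:ℝ) * ((ρ₁*Mb)^2 / rn^2) := by ring
          _ = ρ₁^2 * Mb^2 := by rw [hrn2]; field_simp
        rw [e1, hMb2]
        field_simp
        ring
      rw [hexp]
    refine le_trans (measure_biUnion_card_le μ (simplexNet_card J 1) hone) ?_
    apply ENNReal.ofReal_le_ofReal
    have hsplit : Real.exp (-((J:ℝ)+1+L2))
        = Real.exp (-(J:ℝ)) * Real.exp (-1) * Real.exp (-L2) := by
      rw [← Real.exp_add, ← Real.exp_add]; ring_nf
    have hJexp : (2:ℝ)^J * Real.exp (-(J:ℝ)) ≤ 1 := by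
      rw [Real.exp_neg, ← div_eq_mul_inv, div_le_one (Real.exp_pos _)]
      exact two_pow_le_exp J
    have hE1 : Real.exp (-1:ℝ) ≤ 1/2 := by
      have h2e : (2:ℝ) ≤ Real.exp 1 := by
        have := Real.add_one_le_exp (1:ℝ); linarith
      calc Real.exp (-1:ℝ) = (Real.exp 1)⁻¹ := by rw [Real.exp_neg]
      _ ≤ (2:ℝ)⁻¹ := inv_anti₀ (by norm_num) h2e
      _ = 1/2 := by norm_num
    have hEL2 : Real.exp (-L2) ≤ ε/4 := by
      calc Real.exp (-L2) ≤ Real.exp (-(Real.log (4/ε))) := by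
            apply Real.exp_le_exp.mpr; linarith
      _ = ε/4 := by
            rw [Real.exp_neg, Real.exp_log (by positivity)]
            rw [inv_div]
    calc (((1+1)^J : ℕ) : ℝ) * (2 * Real.exp (-((J:ℝ)+1+L2)))
        = ((2:ℝ)^J * Real.exp (-(J:ℝ))) * (2 * (Real.exp (-1:ℝ) * Real.exp (-L2))) := by
          push_cast
          rw [hsplit]; ring
    _ ≤ 1 * (2 * ((1/2) * (ε/4))) := by
          refine mul_le_mul hJexp ?_ (by positivity) (by norm_num)
          refine mul_le_mul_of_nonneg_left ?_ (by norm_num)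
          exact mul_le_mul hE1 hEL2 (Real.exp_pos _).le (by norm_num)
    _ ≤ ε/2 := by linarith
  have hBadK : ∀ k ∈ Finset.range n,
      μ (⋃ p ∈ pairs k, {ω | sk k ≤ |F p.1 ω - F p.2 ω|})
        ≤ ENNReal.ofReal ((ε/8) * (2⁻¹:ℝ)^k) := by
    intro k _
    set q : ℝ := ((2:ℝ)⁻¹)^k with hq
    have hq0 : 0 < q := by rw [hq]; positivity
    have hqinv : q⁻¹ = (2:ℝ)^k := by rw [hq, ← inv_pow, inv_inv]
    set bk : ℝ := 6*ρ₁*(J:ℝ)*q with hbk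
    have hbk0 : 0 < bk := by rw [hbk]; positivity
    have hJ0 : (J:ℝ) ≠ 0 := by positivity
    have hone : ∀ p ∈ pairs k, μ {ω | sk k ≤ |F p.1 ω - F p.2 ω|}
        ≤ ENNReal.ofReal (2 * Real.exp (-(c * 2^k))) := by
      intro p hp
      rw [hpairs] at hp
      obtain ⟨hpmem, hpd⟩ := Finset.mem_filter.mp hp
      obtain ⟨hp1, hp2⟩ := Finset.mem_product.mp hpmem
      have h1S := simplexNet_mem hp1
      have h2S := simplexNet_mem hp2
      have hgmeas : Measurable (fun e => (h e p.1 - h e p.2) - (mh p.1 - mh p.2)) :=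
        ((hmeas p.1 h1S).sub (hmeas p.2 h2S)).sub measurable_const
      have hgb : ∀ e, |(h e p.1 - h e p.2) - (mh p.1 - mh p.2)| ≤ bk := by
        intro e
        calc |(h e p.1 - h e p.2) - (mh p.1 - mh p.2)|
            ≤ |h e p.1 - h e p.2| + |mh p.1 - mh p.2| := abs_sub _ _
        _ ≤ ρ₁ * ∑ j, |p.1 j - p.2 j| + ρ₁ * ∑ j, |p.1 j - p.2 j| :=
            add_le_add (hLip e p.1 p.2 h1S h2S) (hmh_lip p.1 p.2 h1S h2S)
        _ = 2*ρ₁ * ∑ j, |p.1 j - p.2 j| := by ring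
        _ ≤ 2*ρ₁ * (3*(J:ℝ)*q) := by
            refine mul_le_mul_of_nonneg_left ?_ (by positivity)
            exact hpd
        _ = bk := by rw [hbk]; ring
      have hint12 : Integrable (fun e => h e p.1 - h e p.2) P :=
        (hint p.1 h1S).sub (hint p.2 h2S)
      have h2int : ∫ e, (h e p.1 - h e p.2) ∂P = mh p.1 - mh p.2 := by
        rw [hmh]
        exact integral_sub (hint p.1 h1S) (hint p.2 h2S)
      have hg0 : ∫ e, ((h e p.1 - h e p.2) - (mh p.1 - mh p.2)) ∂P = 0 := by
        rw [integral_sub hint12 (integrable_const _), h2int, integral_const]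
        simp
      have hset : {ω | sk k ≤ |F p.1 ω - F p.2 ω|} = {ω | sk k ≤ |(n:ℝ)⁻¹ *
          ∑ i ∈ Finset.range n,
            (fun e => (h e p.1 - h e p.2) - (mh p.1 - mh p.2)) (ξ i ω)|} := by
        ext ω; simp only [Set.mem_setOf_eq, hFdiff p.1 p.2 ω]
      rw [hset]
      refine le_trans
        (chernoff_avg_abs hξmeas hindep hlaw hgmeas hbk0 hgb hg0 hn (hsk0 k))
        (ENNReal.ofReal_le_ofReal (le_of_eq ?_))
      have hrk : (r^k)^2 = q := by rw [← pow_mul, mul_comm k 2, pow_mul, hr2, hq]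
      have e1 : (n:ℝ) * (sk k)^2 = ρ₁^2 * M^2 * q := by
        rw [hsk]
        calc (n:ℝ) * (ρ₁ * M * r^k / rn)^2
            = (n:ℝ) * ((ρ₁*M)^2 * (r^k)^2 / rn^2) := by ring
        _ = ρ₁^2 * M^2 * q := by
            rw [hrk, hrn2, mul_comm, div_mul_cancel₀ _ hn0.ne']; ring
      have hexp : -((n:ℝ) * (sk k)^2) / (2 * bk^2) = -(c * 2^k) := by
        rw [e1, ← hqinv, div_eq_iff (by positivity : (2 * bk^2) ≠ 0), hM2, hbk]
        have key : q⁻¹ * q ^ 2 = q := by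
          rw [pow_two, ← mul_assoc, inv_mul_cancel₀ hq0.ne', one_mul]
        linear_combination ((72:ℝ)*c*ρ₁^2*(J:ℝ)^2) * key
      rw [hexp]
    have hcard : (pairs k).card ≤ (2^k+1)^J * (2^(k+1)+1)^J := by
      rw [hpairs]
      refine le_trans (Finset.card_filter_le _ _) ?_
      rw [Finset.card_product]
      exact Nat.mul_le_mul (simplexNet_card J (2^k)) (simplexNet_card J (2^(k+1)))
    refine le_trans (measure_biUnion_card_le μ hcard hone) ?_
    apply ENNReal.ofReal_le_ofReal
    -- numeric estimate
    have hone_le : (1:ℝ) ≤ 2^k := one_le_pow₀ (by norm_num)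
    have ha1 : (2:ℝ)^k + 1 ≤ 2^(k+1) := by rw [pow_succ]; linarith
    have ha2 : (2:ℝ)^(k+1) + 1 ≤ 2^(k+2) := by
      have : (1:ℝ) ≤ 2^(k+1) := one_le_pow₀ (by norm_num)
      rw [show ((2:ℝ))^(k+2) = 2^(k+1)*2 from pow_succ 2 (k+1)]; linarith
    have hN : (((2^k+1)^J * (2^(k+1)+1)^J : ℕ) : ℝ) ≤ Real.exp (3*((k:ℝ)+1)*(J:ℝ)) := by
      push_cast
      calc ((2:ℝ)^k+1)^J * ((2:ℝ)^(k+1)+1)^J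
          ≤ ((2:ℝ)^(k+1))^J * ((2:ℝ)^(k+2))^J :=
            mul_le_mul (pow_le_pow_left₀ (by positivity) ha1 J)
              (pow_le_pow_left₀ (by positivity) ha2 J) (by positivity) (by positivity)
      _ = (2:ℝ)^((k+1)*J + (k+2)*J) := by rw [← pow_mul, ← pow_mul, ← pow_add]
      _ ≤ (2:ℝ)^(3*(k+1)*J) := by
            apply pow_le_pow_right₀ (by norm_num)
            calc (k+1)*J + (k+2)*J = (2*k+3)*J := by ring
            _ ≤ (3*k+3)*J := Nat.mul_le_mul_right J (by omega)
            _ = 3*(k+1)*J := by ring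
      _ ≤ Real.exp ((3*(k+1)*J : ℕ) : ℝ) := two_pow_le_exp _
      _ = Real.exp (3*((k:ℝ)+1)*(J:ℝ)) := by push_cast; ring_nf
    have hexp2 : Real.exp (-(c * 2^k)) ≤ Real.exp (-(c*((k:ℝ)+1))) := by
      apply Real.exp_le_exp.mpr
      have h2 := mul_le_mul_of_nonneg_left (succ_le_two_pow k) hc0.le
      linarith
    have hEL1 : Real.exp (-(L1*((k:ℝ)+1))) ≤ ε/8 := by
      have hk1 : (1:ℝ) ≤ (k:ℝ)+1 := by
        have := Nat.cast_nonneg (α:=ℝ) k; linarith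
      have hL1k : L1 ≤ L1*((k:ℝ)+1) := le_mul_of_one_le_right hL1_0 hk1
      calc Real.exp (-(L1*((k:ℝ)+1))) ≤ Real.exp (-(Real.log (8/ε))) := by
            apply Real.exp_le_exp.mpr; linarith
      _ = ε/8 := by rw [Real.exp_neg, Real.exp_log (by positivity), inv_div]
    have hsplit2 : Real.exp (3*((k:ℝ)+1)*(J:ℝ)) * Real.exp (-(c*((k:ℝ)+1)))
        = Real.exp (-((k:ℝ)+1)) * Real.exp (-(L1*((k:ℝ)+1))) := by
      rw [← Real.exp_add, ← Real.exp_add, hc]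
      ring_nf
    calc (((2^k+1)^J * (2^(k+1)+1)^J : ℕ) : ℝ) * (2 * Real.exp (-(c * 2^k)))
        ≤ Real.exp (3*((k:ℝ)+1)*(J:ℝ)) * (2 * Real.exp (-(c*((k:ℝ)+1)))) := by
          refine mul_le_mul hN ?_ (by positivity) (Real.exp_pos _).le
          exact mul_le_mul_of_nonneg_left hexp2 (by norm_num)
    _ = 2 * (Real.exp (-((k:ℝ)+1)) * Real.exp (-(L1*((k:ℝ)+1)))) := by
          rw [show Real.exp (3*((k:ℝ)+1)*(J:ℝ)) * (2 * Real.exp (-(c*((k:ℝ)+1))))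
            = 2 * (Real.exp (3*((k:ℝ)+1)*(J:ℝ)) * Real.exp (-(c*((k:ℝ)+1)))) from by ring,
            hsplit2]
    _ ≤ 2 * ((2⁻¹:ℝ)^(k+1) * (ε/8)) := by
          refine mul_le_mul_of_nonneg_left ?_ (by norm_num)
          refine mul_le_mul ?_ hEL1 (Real.exp_pos _).le (by positivity)
          exact exp_neg_le_half_pow k
    _ = (ε/8) * (2⁻¹:ℝ)^k := by rw [pow_succ]; ring
  -- combine the bounds
  rw [hBaddef]
  calc μ ((⋃ u ∈ (simplexNet J 1 : Finset (Fin J → ℝ)), {ω | sb ≤ |F u ω|}) ∪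
        ⋃ k ∈ Finset.range n, ⋃ p ∈ pairs k, {ω | sk k ≤ |F p.1 ω - F p.2 ω|})
      ≤ μ (⋃ u ∈ (simplexNet J 1 : Finset (Fin J → ℝ)), {ω | sb ≤ |F u ω|}) +
        μ (⋃ k ∈ Finset.range n, ⋃ p ∈ pairs k, {ω | sk k ≤ |F p.1 ω - F p.2 ω|}) :=
        measure_union_le _ _
  _ ≤ ENNReal.ofReal (ε/2) + ∑ k ∈ Finset.range n, ENNReal.ofReal ((ε/8) * (2⁻¹:ℝ)^k) :=
      add_le_add hBad0 (le_trans (measure_biUnion_finset_le _ _) (Finset.sum_le_sum hBadK))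
  _ ≤ ENNReal.ofReal (ε/2) + ENNReal.ofReal (ε/2) := by
      refine add_le_add le_rfl ?_
      rw [← ENNReal.ofReal_sum_of_nonneg (fun k _ => by positivity)]
      apply ENNReal.ofReal_le_ofReal
      calc ∑ k ∈ Finset.range n, (ε/8) * (2⁻¹:ℝ)^k
          = (ε/8) * ∑ k ∈ Finset.range n, (2⁻¹:ℝ)^k := by rw [Finset.mul_sum]
      _ ≤ (ε/8) * 4 := by
          refine mul_le_mul_of_nonneg_left ?_ (by positivity)
          exact geom_aux (by norm_num) (by norm_num) n
      _ = ε/2 := by ring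
  _ ≤ ENNReal.ofReal ε := by
      rw [← ENNReal.ofReal_add (by positivity) (by positivity)]
      apply ENNReal.ofReal_le_ofReal
      linarith
end
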